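/- arXiv:1102.0059 — 4 statements merged into one kernel-verified Lean document; each statement's English description precedes it below -/
import Mathlib

section
/- (Anderson's lemma on the Bayes error rate.) Let Σ be a p×p positive definite real matrix, let μ₁, μ₂ ∈ ℝᵖ, set u = μ₁ − μ₂ and S = uᵀΣ⁻¹u. In the balanced Gaussian mixture model with classes N(μ₁, Σ) and N(μ₂, Σ), every measurable classifier g : ℝᵖ → {0, 1} satisfies (1/2)·P_{X~N(μ₁,Σ)}(g(X) ≠ 1) + (1/2)·P_{X~N(μ₂,Σ)}(g(X) ≠ 0) ≥ Φ(−√S / 2); consequently the Bayes error rate under 0–1 loss equals Φ(−√S / 2). -/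
open MeasureTheory ProbabilityTheory Matrix
open scoped ENNReal NNReal

/-- The standard Gaussian measure on `Fin p → ℝ`: product of `p` iid standard normals. -/
noncomputable def stdGaussianPi (p : ℕ) : Measure (Fin p → ℝ) :=
  Measure.pi fun _ => gaussianReal 0 1

/-- The multivariate Gaussian measure `N(μ, Cov)` on `ℝᵖ`. -/
noncomputable def multivariateGaussian {p : ℕ} (μ : Fin p → ℝ)
    (Cov : Matrix (Fin p) (Fin p) ℝ) (hCov : Cov.PosSemidef) : Measure (Fin p → ℝ) :=
  Measure.map (fun z => μ + ((hCov.1.eigenvectorUnitary : Matrix (Fin p) (Fin p) ℝ) *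
    diagonal ((RCLike.ofReal : ℝ → ℝ) ∘ (Real.sqrt ∘ hCov.1.eigenvalues)) *
    (star hCov.1.eigenvectorUnitary : Matrix (Fin p) (Fin p) ℝ)).mulVec z) (stdGaussianPi p)

/-- The standard normal cumulative distribution function `Φ`. -/
noncomputable def stdNormalCDF (x : ℝ) : ℝ :=
  ((gaussianReal 0 1) (Set.Iic x)).toReal

/-- The error rate of a classifier `g : ℝᵖ → {0,1}` (here `Bool`) in the balanced Gaussian
mixture with classes `N(μ₁, Cov)` (label `1` = `true`) and `N(μ₂, Cov)` (label `0` = `false`):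
`(1/2)·P_{X~N(μ₁,Cov)}(g(X) ≠ 1) + (1/2)·P_{X~N(μ₂,Cov)}(g(X) ≠ 0)`. -/
noncomputable def mixtureErrorRate {p : ℕ} (μ₁ μ₂ : Fin p → ℝ)
    (Cov : Matrix (Fin p) (Fin p) ℝ) (hCov : Cov.PosSemidef)
    (g : (Fin p → ℝ) → Bool) : ℝ :=
  (1 / 2) * ((multivariateGaussian μ₁ Cov hCov) {x | g x ≠ true}).toReal
    + (1 / 2) * ((multivariateGaussian μ₂ Cov hCov) {x | g x ≠ false}).toReal

section Aux

open Real

lemma gaussPDF_mul (a b : ℝ≥0) (ha : a ≠ 0) (hb : b ≠ 0) (s x : ℝ) :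
    gaussianPDFReal 0 a x * gaussianPDFReal 0 b (s - x)
      = gaussianPDFReal 0 (a + b) s * gaussianPDFReal ((a : ℝ) * s / (a + b)) (a * b / (a + b)) x := by
  have hA : (0:ℝ) < a := lt_of_le_of_ne a.coe_nonneg (by exact_mod_cast (Ne.symm ha))
  have hB : (0:ℝ) < b := lt_of_le_of_ne b.coe_nonneg (by exact_mod_cast (Ne.symm hb))
  have hAB : (0:ℝ) < (a:ℝ) + b := by linarith
  have hπ : (0:ℝ) < 2 * π := by positivity
  simp only [gaussianPDFReal, NNReal.coe_add, NNReal.coe_div, NNReal.coe_mul]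
  rw [mul_mul_mul_comm, ← mul_inv, ← Real.exp_add, mul_mul_mul_comm, ← mul_inv, ← Real.exp_add]
  congr 1
  · congr 1
    rw [← Real.sqrt_mul (by positivity), ← Real.sqrt_mul (by positivity)]
    congr 1
    field_simp
  · congr 1
    field_simp
    ring

lemma map_add_gaussianReal (a b : ℝ≥0) :
    ((gaussianReal 0 a).prod (gaussianReal 0 b)).map (fun q : ℝ × ℝ => q.1 + q.2)
      = gaussianReal 0 (a + b) := by
  rcases eq_or_ne a 0 with rfl | ha
  · rw [gaussianReal_zero_var, Measure.dirac_prod, Measure.map_map (by fun_prop) (by fun_prop)]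
    have : ((fun q : ℝ × ℝ => q.1 + q.2) ∘ Prod.mk (0:ℝ)) = fun y : ℝ => y := by
      funext y; simp
    rw [this, Measure.map_id', zero_add]
  rcases eq_or_ne b 0 with rfl | hb
  · rw [gaussianReal_zero_var, Measure.prod_dirac, Measure.map_map (by fun_prop) (by fun_prop)]
    have : ((fun q : ℝ × ℝ => q.1 + q.2) ∘ (fun x : ℝ => (x, (0:ℝ)))) = fun y : ℝ => y := by
      funext y; simp
    rw [this, Measure.map_id', add_zero]
  have hab : a + b ≠ 0 := by positivity
  have hmap : Measurable (fun q : ℝ × ℝ => q.1 + q.2) := by fun_prop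
  have : IsProbabilityMeasure (((gaussianReal 0 a).prod (gaussianReal 0 b)).map
      (fun q : ℝ × ℝ => q.1 + q.2)) := Measure.isProbabilityMeasure_map hmap.aemeasurable
  refine Measure.ext_of_Iic _ _ (fun c => ?_)
  rw [Measure.map_apply hmap measurableSet_Iic]
  have hset : (fun q : ℝ × ℝ => q.1 + q.2) ⁻¹' Set.Iic c = {q : ℝ × ℝ | q.1 + q.2 ≤ c} := rfl
  rw [hset, Measure.prod_apply (by exact measurableSet_le (by fun_prop) measurable_const)]
  have h1 : ∀ x : ℝ, (Prod.mk x ⁻¹' {q : ℝ × ℝ | q.1 + q.2 ≤ c}) = Set.Iic (c - x) := by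
    intro x; ext y; simp [Set.mem_Iic, le_sub_iff_add_le']
  simp_rw [h1]
  -- each inner measure as set lintegral over volume
  have h2 : ∀ x : ℝ, gaussianReal 0 b (Set.Iic (c - x))
      = ∫⁻ s in Set.Iic c, gaussianPDF 0 b (s - x) := by
    intro x
    rw [gaussianReal_apply _ hb]
    have hT : MeasurePreserving (fun y : ℝ => y + x) volume volume :=
      measurePreserving_add_right volume x
    have hemb : MeasurableEmbedding (fun y : ℝ => y + x) :=
      (Homeomorph.addRight x).measurableEmbedding
    have := hT.setLIntegral_comp_preimage_emb hemb (fun s => gaussianPDF 0 b (s - x)) (Set.Iic c)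
    have hpre : (fun y : ℝ => y + x) ⁻¹' Set.Iic c = Set.Iic (c - x) := by
      ext y; simp [Set.mem_Iic, le_sub_iff_add_le]
    rw [hpre] at this
    rw [← this]
    simp
  simp_rw [h2]
  -- outer integral against gaussianReal 0 a = withDensity
  rw [gaussianReal_of_var_ne_zero _ ha,
    lintegral_withDensity_eq_lintegral_mul _ (measurable_gaussianPDF 0 a)
      (by
        apply Measurable.lintegral_prod_right'
          (f := fun q : ℝ × ℝ => gaussianPDF 0 b (q.2 - q.1))
        exact (measurable_gaussianPDF 0 b).comp (by fun_prop))]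
  have h3 : ∀ x : ℝ, gaussianPDF 0 a x * ∫⁻ s in Set.Iic c, gaussianPDF 0 b (s - x)
      = ∫⁻ s in Set.Iic c, gaussianPDF 0 a x * gaussianPDF 0 b (s - x) := by
    intro x
    have hm : Measurable fun s : ℝ => gaussianPDF 0 b (s - x) :=
      (measurable_gaussianPDF 0 b).comp (by fun_prop)
    rw [lintegral_const_mul _ hm]
  simp only [Pi.mul_apply]
  simp_rw [h3]
  rw [lintegral_lintegral_swap (by
    apply Measurable.aemeasurable
    show Measurable ((fun q : ℝ × ℝ => gaussianPDF 0 a q.1) * fun q : ℝ × ℝ => gaussianPDF 0 b (q.2 - q.1))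
    apply Measurable.mul
    · exact (measurable_gaussianPDF 0 a).comp measurable_fst
    · exact (measurable_gaussianPDF 0 b).comp (by fun_prop))]
  have h4 : ∀ s : ℝ, ∫⁻ x, gaussianPDF 0 a x * gaussianPDF 0 b (s - x)
      = gaussianPDF 0 (a + b) s := by
    intro s
    have habv : a * b / (a + b) ≠ 0 := div_ne_zero (mul_ne_zero ha hb) hab
    calc ∫⁻ x, gaussianPDF 0 a x * gaussianPDF 0 b (s - x)
        = ∫⁻ x, gaussianPDF 0 (a + b) s
            * gaussianPDF ((a:ℝ) * s / ((a:ℝ) + b)) (a * b / (a + b)) x := by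
          congr 1; funext x
          simp only [gaussianPDF_def]
          rw [← ENNReal.ofReal_mul (gaussianPDFReal_nonneg _ _ _),
            ← ENNReal.ofReal_mul (gaussianPDFReal_nonneg _ _ _), gaussPDF_mul a b ha hb]
      _ = gaussianPDF 0 (a + b) s * 1 := by
          rw [lintegral_const_mul _ (measurable_gaussianPDF _ _),
            lintegral_gaussianPDF_eq_one _ habv]
      _ = gaussianPDF 0 (a + b) s := mul_one _
  simp_rw [h4]
  rw [← gaussianReal_apply _ hab]

lemma lintegral_pi_prod : ∀ {n : ℕ} (f : Fin n → ℝ → ℝ≥0∞), (∀ i, Measurable (f i)) →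
    ∫⁻ x : Fin n → ℝ, ∏ i, f i (x i) ∂(Measure.pi fun _ => (volume : Measure ℝ))
      = ∏ i, ∫⁻ t, f i t := by
  intro n
  induction n with
  | zero =>
    intro f hf
    simp only [Finset.univ_eq_empty, Finset.prod_empty]
    rw [lintegral_const, Measure.pi_univ]
    simp
  | succ n ih =>
    intro f hf
    have hMP := measurePreserving_piFinSuccAbove (fun _ : Fin (n+1) => (volume : Measure ℝ)) 0
    set e := MeasurableEquiv.piFinSuccAbove (fun _ : Fin (n+1) => ℝ) 0 with he
    have hfun : (fun x : Fin (n+1) → ℝ => ∏ i, f i (x i))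
        = (fun q : ℝ × (Fin n → ℝ) => f 0 q.1 * ∏ j, f (Fin.succ j) (q.2 j)) ∘ e := by
      funext x
      simp only [Function.comp_apply, he, MeasurableEquiv.piFinSuccAbove,
        MeasurableEquiv.coe_mk, MeasurableEquiv.piFinSuccAbove_apply]
      rw [Fin.prod_univ_succ]
      simp [Fin.removeNth, Fin.succAbove, Fin.tail]
    have hG : Measurable (fun q : ℝ × (Fin n → ℝ) => f 0 q.1 * ∏ j, f (Fin.succ j) (q.2 j)) := by
      apply Measurable.mul
      · exact (hf 0).comp measurable_fst
      · exact Finset.measurable_prod _ fun j _ =>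
          (hf _).comp ((measurable_pi_apply j).comp measurable_snd)
    have key : ∫⁻ q : ℝ × (Fin n → ℝ), f 0 q.1 * ∏ j, f (Fin.succ j) (q.2 j)
          ∂((volume : Measure ℝ).prod (Measure.pi fun _ : Fin n => (volume : Measure ℝ)))
        = ∫⁻ x : Fin (n+1) → ℝ, (fun q : ℝ × (Fin n → ℝ) => f 0 q.1
            * ∏ j, f (Fin.succ j) (q.2 j)) (e x) ∂(Measure.pi fun _ => (volume : Measure ℝ)) := by
      rw [← hMP.map_eq, lintegral_map_equiv]
    rw [hfun]
    show ∫⁻ x, (fun q : ℝ × (Fin n → ℝ) => f 0 q.1 * ∏ j, f (Fin.succ j) (q.2 j)) (e x)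
        ∂(Measure.pi fun _ => (volume : Measure ℝ)) = _
    rw [← key, lintegral_prod_mul (f := f 0)
      (g := fun w : Fin n → ℝ => ∏ j, f (Fin.succ j) (w j)) (hf 0).aemeasurable
      (Finset.measurable_prod Finset.univ (fun j _ =>
        (hf _).comp (measurable_pi_apply j))).aemeasurable,
      ih _ (fun j => hf _), Fin.prod_univ_succ]

lemma stdGaussianPi_eq_withDensity (n : ℕ) :
    stdGaussianPi n = (Measure.pi fun _ => (volume : Measure ℝ)).withDensity
      fun x => ∏ i, gaussianPDF 0 1 (x i) := by
  refine Measure.pi_eq fun s hs => ?_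
  rw [withDensity_apply _ (MeasurableSet.univ_pi hs),
    ← lintegral_indicator (MeasurableSet.univ_pi hs)]
  have hind : ∀ x : Fin n → ℝ, (Set.pi Set.univ s).indicator
        (fun x => ∏ i, gaussianPDF 0 1 (x i)) x
      = ∏ i, (s i).indicator (gaussianPDF 0 1) (x i) := by
    intro x
    by_cases hx : x ∈ Set.pi Set.univ s
    · rw [Set.indicator_of_mem hx]
      exact Finset.prod_congr rfl fun i _ =>
        (Set.indicator_of_mem (hx i (Set.mem_univ i)) _).symm
    · rw [Set.indicator_of_notMem hx]
      rw [Set.mem_univ_pi] at hx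
      push_neg at hx
      obtain ⟨i, hi⟩ := hx
      exact (Finset.prod_eq_zero (Finset.mem_univ i)
        (by rw [Set.indicator_of_notMem hi])).symm
  simp_rw [hind]
  rw [lintegral_pi_prod _ (fun i => (measurable_gaussianPDF 0 1).indicator (hs i))]
  refine Finset.prod_congr rfl fun i _ => ?_
  rw [lintegral_indicator (hs i), ← gaussianReal_apply 0 one_ne_zero]


lemma stdGaussianPi_map_linComb : ∀ (n : ℕ) (v : Fin n → ℝ),
    (stdGaussianPi n).map (fun z => ∑ i, v i * z i)
      = gaussianReal 0 (∑ i, (⟨v i ^ 2, sq_nonneg _⟩ : ℝ≥0)) := by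
  intro n
  induction n with
  | zero =>
    intro v
    have h0 : (fun z : Fin 0 → ℝ => ∑ i, v i * z i) = fun _ => (0:ℝ) := by
      funext z; simp
    have : IsProbabilityMeasure (stdGaussianPi 0) := by
      rw [stdGaussianPi]; infer_instance
    rw [h0, Measure.map_const, measure_univ, one_smul]
    simp only [Finset.univ_eq_empty, Finset.sum_empty]
    exact (gaussianReal_zero_var 0).symm
  | succ n ih =>
    intro v
    have hMP := measurePreserving_piFinSuccAbove (fun _ : Fin (n+1) => gaussianReal 0 1) 0
    set e := MeasurableEquiv.piFinSuccAbove (fun _ : Fin (n+1) => ℝ) 0 with he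
    have hG : Measurable (fun q : ℝ × (Fin n → ℝ) => v 0 * q.1 + ∑ j, v (Fin.succ j) * q.2 j) := by
      apply Measurable.add
      · exact measurable_fst.const_mul _
      · exact Finset.measurable_sum _ fun j _ =>
          ((measurable_pi_apply j).comp measurable_snd).const_mul _
    have hfun : (fun z : Fin (n+1) → ℝ => ∑ i, v i * z i)
        = (fun q : ℝ × (Fin n → ℝ) => v 0 * q.1 + ∑ j, v (Fin.succ j) * q.2 j) ∘ e := by
      funext z
      simp only [Function.comp_apply, he, MeasurableEquiv.piFinSuccAbove,
        MeasurableEquiv.coe_mk, MeasurableEquiv.piFinSuccAbove_apply]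
      rw [Fin.sum_univ_succ]
      simp [Fin.removeNth, Fin.succAbove, Fin.tail]
    have hmeas_e : Measurable (⇑e) := e.measurable
    rw [stdGaussianPi, hfun, ← Measure.map_map hG hmeas_e, hMP.map_eq]
    have hsplit : (fun q : ℝ × (Fin n → ℝ) => v 0 * q.1 + ∑ j, v (Fin.succ j) * q.2 j)
        = (fun r : ℝ × ℝ => r.1 + r.2) ∘ Prod.map (fun x : ℝ => v 0 * x)
            (fun w : Fin n → ℝ => ∑ j, v (Fin.succ j) * w j) := by
      funext q; rfl
    have hT : Measurable (fun w : Fin n → ℝ => ∑ j, v (Fin.succ j) * w j) :=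
      Finset.measurable_sum _ fun j _ => (measurable_pi_apply j).const_mul _
    rw [hsplit, ← Measure.map_map (by fun_prop) ((by fun_prop : Measurable fun x : ℝ => v 0 * x).prodMap hT),
      ← Measure.map_prod_map _ _ (by fun_prop : Measurable fun x : ℝ => v 0 * x) hT]
    have h1 : (gaussianReal 0 1).map (fun x : ℝ => v 0 * x)
        = gaussianReal 0 (⟨v 0 ^ 2, sq_nonneg _⟩ : ℝ≥0) := by
      rw [gaussianReal_map_const_mul]
      congr 1
      · ring
      · ext; simp [sq]; rfl
    have h2 : (Measure.pi fun _ : Fin n => gaussianReal 0 1).map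
          (fun w : Fin n → ℝ => ∑ j, v (Fin.succ j) * w j)
        = gaussianReal 0 (∑ j, (⟨v (Fin.succ j) ^ 2, sq_nonneg _⟩ : ℝ≥0)) := by
      have h2' := ih (fun j => v (Fin.succ j))
      rw [stdGaussianPi] at h2'
      exact h2'
    rw [h1, h2]; erw [map_add_gaussianReal]
    congr 1
    exact (Fin.sum_univ_succ (M := ℝ≥0) (fun i => (⟨v i ^ 2, sq_nonneg _⟩ : ℝ≥0))).symm

end Aux
section Aux2

open Real

lemma prod_pdf_shift {n : ℕ} (x v : Fin n → ℝ) :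
    ∏ i, gaussianPDFReal 0 1 (x i - v i)
      = Real.exp ((∑ i, v i * x i) - (∑ i, v i ^ 2) / 2) * ∏ i, gaussianPDFReal 0 1 (x i) := by
  simp only [gaussianPDFReal, NNReal.coe_one, mul_one, sub_zero]
  rw [Finset.prod_mul_distrib, Finset.prod_mul_distrib, ← Real.exp_sum, ← Real.exp_sum]
  have hE : ∑ i, -(x i - v i) ^ 2 / 2
      = ((∑ i, v i * x i) - (∑ i, v i ^ 2) / 2) + ∑ i, -(x i) ^ 2 / 2 := by
    have h : ∀ i ∈ Finset.univ, -(x i - v i) ^ 2 / 2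
        = (v i * x i - v i ^ 2 / 2) + -(x i) ^ 2 / 2 := fun i _ => by ring
    rw [Finset.sum_congr rfl h, Finset.sum_add_distrib, Finset.sum_sub_distrib,
      ← Finset.sum_div]
  rw [hE, Real.exp_add]
  ring

lemma stdGaussianPi_apply_dens {n : ℕ} {C : Set (Fin n → ℝ)} (hC : MeasurableSet C) :
    stdGaussianPi n C
      = ∫⁻ x in C, ∏ i, gaussianPDF 0 1 (x i) ∂(Measure.pi fun _ => (volume : Measure ℝ)) := by
  rw [stdGaussianPi_eq_withDensity, withDensity_apply _ hC]

lemma stdGaussianPi_shift_apply_dens {n : ℕ} (v : Fin n → ℝ) {C : Set (Fin n → ℝ)}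
    (hC : MeasurableSet C) :
    stdGaussianPi n ((· + v) ⁻¹' C)
      = ∫⁻ x in C, ∏ i, gaussianPDF 0 1 (x i - v i)
          ∂(Measure.pi fun _ => (volume : Measure ℝ)) := by
  have hmeas : Measurable (fun x : Fin n → ℝ => x + v) := measurable_id.add_const v
  rw [stdGaussianPi_apply_dens (hmeas hC)]
  have hT : MeasurePreserving (fun x : Fin n → ℝ => x + v)
      (Measure.pi fun _ => (volume : Measure ℝ)) (Measure.pi fun _ => (volume : Measure ℝ)) :=
    measurePreserving_add_right _ v
  have hemb : MeasurableEmbedding (fun x : Fin n → ℝ => x + v) :=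
    (Homeomorph.addRight v).measurableEmbedding
  have := hT.setLIntegral_comp_preimage_emb hemb
    (fun y => ∏ i, gaussianPDF 0 1 (y i - v i)) C
  rw [← this]
  refine setLIntegral_congr_fun_ae (hmeas hC) (ae_of_all _ fun x _ => ?_)
  refine Finset.prod_congr rfl fun i _ => ?_
  simp

lemma shift_le_of_le_half {n : ℕ} (v : Fin n → ℝ) {C : Set (Fin n → ℝ)} (hC : MeasurableSet C)
    (h : ∀ x ∈ C, ∑ i, v i * x i ≤ (∑ i, v i ^ 2) / 2) :
    stdGaussianPi n ((· + v) ⁻¹' C) ≤ stdGaussianPi n C := by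
  rw [stdGaussianPi_shift_apply_dens v hC, stdGaussianPi_apply_dens hC]
  refine setLIntegral_mono (Finset.measurable_prod _ fun i _ =>
    (measurable_gaussianPDF 0 1).comp (measurable_pi_apply i)) fun x hx => ?_
  simp only [gaussianPDF_def]
  rw [← ENNReal.ofReal_prod_of_nonneg (fun i _ => gaussianPDFReal_nonneg _ _ _),
    ← ENNReal.ofReal_prod_of_nonneg (fun i _ => gaussianPDFReal_nonneg _ _ _)]
  refine ENNReal.ofReal_le_ofReal ?_
  rw [prod_pdf_shift]
  refine mul_le_of_le_one_left (Finset.prod_nonneg fun i _ => gaussianPDFReal_nonneg _ _ _) ?_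
  rw [Real.exp_le_one_iff]
  have := h x hx
  linarith

lemma le_shift_of_half_le {n : ℕ} (v : Fin n → ℝ) {C : Set (Fin n → ℝ)} (hC : MeasurableSet C)
    (h : ∀ x ∈ C, (∑ i, v i ^ 2) / 2 ≤ ∑ i, v i * x i) :
    stdGaussianPi n C ≤ stdGaussianPi n ((· + v) ⁻¹' C) := by
  rw [stdGaussianPi_shift_apply_dens v hC, stdGaussianPi_apply_dens hC]
  refine setLIntegral_mono (Finset.measurable_prod _ fun i _ =>
    (measurable_gaussianPDF 0 1).comp ((measurable_pi_apply i).sub measurable_const))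
    fun x hx => ?_
  simp only [gaussianPDF_def]
  rw [← ENNReal.ofReal_prod_of_nonneg (fun i _ => gaussianPDFReal_nonneg _ _ _),
    ← ENNReal.ofReal_prod_of_nonneg (fun i _ => gaussianPDFReal_nonneg _ _ _)]
  refine ENNReal.ofReal_le_ofReal ?_
  rw [prod_pdf_shift]
  refine le_mul_of_one_le_left (Finset.prod_nonneg fun i _ => gaussianPDFReal_nonneg _ _ _) ?_
  rw [Real.one_le_exp_iff]
  have := h x hx
  linarith

end Aux2
section Aux3

open Real

lemma gaussianReal_singleton (μ : ℝ) {v : ℝ≥0} (hv : v ≠ 0) (a : ℝ) :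
    gaussianReal μ v {a} = 0 :=
  gaussianReal_absolutelyContinuous μ hv (volume_singleton)

lemma gaussianReal_Iio_eq_Iic (μ : ℝ) {v : ℝ≥0} (hv : v ≠ 0) (a : ℝ) :
    gaussianReal μ v (Set.Iio a) = gaussianReal μ v (Set.Iic a) := by
  have h : Set.Iic a = Set.Iio a ∪ {a} := by
    ext x; simp [le_iff_lt_or_eq]
  rw [h, measure_union (by simp) (measurableSet_singleton a),
    gaussianReal_singleton μ hv a, add_zero]

lemma gaussianReal_scale (S : ℝ≥0) (hS : S ≠ 0) {s : Set ℝ} (hs : MeasurableSet s) :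
    gaussianReal 0 S s = gaussianReal 0 1 ((fun x => Real.sqrt S * x) ⁻¹' s) := by
  have h : (gaussianReal 0 1).map (fun x => Real.sqrt S * x) = gaussianReal 0 S := by
    rw [gaussianReal_map_const_mul]
    congr 1
    · ring
    · ext
      simp [Real.sq_sqrt S.coe_nonneg]
  rw [← h, Measure.map_apply (measurable_const_mul _) hs]

lemma gaussianReal_reflect (t : ℝ) :
    gaussianReal 0 1 (Set.Ici t) = gaussianReal 0 1 (Set.Iic (-t)) := by
  have h : (gaussianReal 0 1).map (fun x : ℝ => (-1 : ℝ) * x) = gaussianReal 0 1 := by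
    rw [gaussianReal_map_const_mul]
    congr 1
    · ring
    · ext; norm_num
  conv_lhs => rw [← h]
  rw [Measure.map_apply (measurable_const_mul _) measurableSet_Ici]
  congr 1
  ext x
  simp only [Set.mem_preimage, Set.mem_Ici, Set.mem_Iic, neg_one_mul]
  constructor
  · intro hx; linarith
  · intro hx; linarith

lemma gaussianReal_Ici_half (S : ℝ≥0) (hS : S ≠ 0) :
    gaussianReal 0 S (Set.Ici ((S : ℝ) / 2))
      = gaussianReal 0 1 (Set.Iic (-Real.sqrt S / 2)) := by
  have hc : (0:ℝ) < Real.sqrt S := Real.sqrt_pos.mpr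
    (lt_of_le_of_ne S.coe_nonneg (by exact_mod_cast hS.symm))
  rw [gaussianReal_scale S hS measurableSet_Ici]
  have hpre : (fun x => Real.sqrt S * x) ⁻¹' Set.Ici ((S : ℝ) / 2)
      = Set.Ici (Real.sqrt S / 2) := by
    ext x
    simp only [Set.mem_preimage, Set.mem_Ici]
    rw [show ((S : ℝ) / 2) = Real.sqrt S * (Real.sqrt S / 2) by
      nlinarith [Real.sq_sqrt S.coe_nonneg]]
    exact mul_le_mul_iff_right₀ hc
  rw [hpre, gaussianReal_reflect, neg_div]

lemma gaussianReal_Iic_negHalf (S : ℝ≥0) (hS : S ≠ 0) :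
    gaussianReal 0 S (Set.Iic (-(S : ℝ) / 2))
      = gaussianReal 0 1 (Set.Iic (-Real.sqrt S / 2)) := by
  have hc : (0:ℝ) < Real.sqrt S := Real.sqrt_pos.mpr
    (lt_of_le_of_ne S.coe_nonneg (by exact_mod_cast hS.symm))
  rw [gaussianReal_scale S hS measurableSet_Iic]
  congr 1
  ext x
  simp only [Set.mem_preimage, Set.mem_Iic]
  rw [show (-(S : ℝ) / 2) = Real.sqrt S * (-Real.sqrt S / 2) by
    nlinarith [Real.sq_sqrt S.coe_nonneg]]
  exact mul_le_mul_iff_right₀ hc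

end Aux3
section Aux4

open Real

lemma measurable_linComb {n : ℕ} (v : Fin n → ℝ) :
    Measurable (fun z : Fin n → ℝ => ∑ i, v i * z i) :=
  Finset.measurable_sum _ fun i _ => (measurable_pi_apply i).const_mul _

lemma stdGaussianPi_linComb_mem {n : ℕ} (v : Fin n → ℝ) {s : Set ℝ} (hs : MeasurableSet s) :
    stdGaussianPi n {z | (∑ i, v i * z i) ∈ s}
      = gaussianReal 0 (∑ i, (⟨v i ^ 2, sq_nonneg _⟩ : ℝ≥0)) s := by
  rw [← stdGaussianPi_map_linComb n v, Measure.map_apply (measurable_linComb v) hs]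
  rfl

lemma anderson_lb {n : ℕ} (v : Fin n → ℝ) (hv : (0:ℝ) < ∑ i, v i ^ 2)
    {B : Set (Fin n → ℝ)} (hB : MeasurableSet B) :
    gaussianReal 0 1 (Set.Iic (-Real.sqrt (∑ i, v i ^ 2) / 2))
      + gaussianReal 0 1 (Set.Iic (-Real.sqrt (∑ i, v i ^ 2) / 2))
      ≤ stdGaussianPi n B + stdGaussianPi n ((· + v) ⁻¹' Bᶜ) := by
  set SR : ℝ := ∑ i, v i ^ 2 with hSR
  set Sn : ℝ≥0 := ∑ i, (⟨v i ^ 2, sq_nonneg _⟩ : ℝ≥0) with hSn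
  have hSnR : (Sn : ℝ) = SR := by
    rw [hSn, hSR]
    push_cast
    exact NNReal.coe_sum ..
  have hSn0 : Sn ≠ 0 := by
    intro h0
    rw [h0] at hSnR
    simp at hSnR
    rw [← hSnR] at hv
    exact lt_irrefl 0 hv
  have hT := measurable_linComb v
  set H : Set (Fin n → ℝ) := {z | (∑ i, v i * z i) ∈ Set.Ici (SR / 2)} with hHdef
  have hH : MeasurableSet H := hT measurableSet_Ici
  have hpre : Measurable (fun z : Fin n → ℝ => z + v) := measurable_id.add_const v
  have hsum : ∀ z : Fin n → ℝ, (∑ i, v i * (z + v) i) = (∑ i, v i * z i) + SR := by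
    intro z
    rw [hSR, ← Finset.sum_add_distrib]
    refine Finset.sum_congr rfl fun i _ => ?_
    simp only [Pi.add_apply]
    ring
  -- split γ B
  have split1 : stdGaussianPi n (B ∩ H) + stdGaussianPi n (B \ H) = stdGaussianPi n B :=
    measure_inter_add_diff B hH
  -- split γ (pre Bᶜ)
  have split2 : stdGaussianPi n ((· + v) ⁻¹' Bᶜ ∩ (· + v) ⁻¹' H)
      + stdGaussianPi n ((· + v) ⁻¹' Bᶜ \ (· + v) ⁻¹' H)
      = stdGaussianPi n ((· + v) ⁻¹' Bᶜ) :=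
    measure_inter_add_diff _ (hpre hH)
  have hpre_inter : (· + v) ⁻¹' Bᶜ ∩ (· + v) ⁻¹' H = (· + v) ⁻¹' (Bᶜ ∩ H) := rfl
  have hpre_diff : (· + v) ⁻¹' Bᶜ \ (· + v) ⁻¹' H = (· + v) ⁻¹' (Bᶜ \ H) := rfl
  -- comparisons
  have cmp1 : stdGaussianPi n ((· + v) ⁻¹' (B \ H)) ≤ stdGaussianPi n (B \ H) := by
    refine shift_le_of_le_half v (hB.diff hH) fun x hx => ?_
    have : ¬ (SR / 2 ≤ ∑ i, v i * x i) := hx.2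
    linarith [lt_of_not_ge this]
  have cmp2 : stdGaussianPi n (Bᶜ ∩ H) ≤ stdGaussianPi n ((· + v) ⁻¹' (Bᶜ ∩ H)) := by
    refine le_shift_of_half_le v (hB.compl.inter hH) fun x hx => ?_
    exact hx.2
  -- first bracket is γ H
  have hbr1 : stdGaussianPi n (B ∩ H) + stdGaussianPi n (Bᶜ ∩ H) = stdGaussianPi n H := by
    have := measure_inter_add_diff (μ := stdGaussianPi n) H hB
    rw [Set.inter_comm] at this
    rw [show Bᶜ ∩ H = H \ B by ext x; simp [Set.mem_diff, And.comm]]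
    exact this
  -- second bracket is γ (pre Hᶜ)
  have hbr2 : stdGaussianPi n ((· + v) ⁻¹' (B \ H)) + stdGaussianPi n ((· + v) ⁻¹' (Bᶜ \ H))
      = stdGaussianPi n ((· + v) ⁻¹' Hᶜ) := by
    have := measure_inter_add_diff (μ := stdGaussianPi n) ((· + v) ⁻¹' Hᶜ) (hpre hB)
    rw [show (· + v) ⁻¹' Hᶜ ∩ (· + v) ⁻¹' B = (· + v) ⁻¹' (B \ H) by
        ext x; simp [Set.mem_diff, And.comm],
      show (· + v) ⁻¹' Hᶜ \ (· + v) ⁻¹' B = (· + v) ⁻¹' (Bᶜ \ H) by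
        ext x; simp [Set.mem_diff, And.comm]] at this
    exact this
  -- values of γ H and γ (pre Hᶜ)
  have hvalH : stdGaussianPi n H = gaussianReal 0 1 (Set.Iic (-Real.sqrt SR / 2)) := by
    rw [hHdef, stdGaussianPi_linComb_mem v measurableSet_Ici, ← hSn]
    rw [show SR / 2 = (Sn : ℝ) / 2 by rw [hSnR]]
    rw [gaussianReal_Ici_half Sn hSn0, hSnR]
  have hvalHc : stdGaussianPi n ((· + v) ⁻¹' Hᶜ)
      = gaussianReal 0 1 (Set.Iic (-Real.sqrt SR / 2)) := by
    have hset : (· + v) ⁻¹' Hᶜ = {z | (∑ i, v i * z i) ∈ Set.Iio (-SR / 2)} := by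
      ext z
      simp only [Set.mem_preimage, Set.mem_compl_iff, hHdef, Set.mem_setOf_eq, Set.mem_Ici,
        Set.mem_Iio, not_le, hsum z]
      constructor <;> intro h <;> linarith
    rw [hset, stdGaussianPi_linComb_mem v measurableSet_Iio, ← hSn,
      gaussianReal_Iio_eq_Iic 0 hSn0, show -SR / 2 = -(Sn : ℝ) / 2 by rw [hSnR],
      gaussianReal_Iic_negHalf Sn hSn0, hSnR]
  calc gaussianReal 0 1 (Set.Iic (-Real.sqrt SR / 2))
        + gaussianReal 0 1 (Set.Iic (-Real.sqrt SR / 2))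
      = stdGaussianPi n H + stdGaussianPi n ((· + v) ⁻¹' Hᶜ) := by rw [hvalH, hvalHc]
    _ = (stdGaussianPi n (B ∩ H) + stdGaussianPi n (Bᶜ ∩ H))
        + (stdGaussianPi n ((· + v) ⁻¹' (B \ H))
            + stdGaussianPi n ((· + v) ⁻¹' (Bᶜ \ H))) := by rw [hbr1, hbr2]
    _ ≤ (stdGaussianPi n (B ∩ H) + stdGaussianPi n ((· + v) ⁻¹' (Bᶜ ∩ H)))
        + (stdGaussianPi n (B \ H) + stdGaussianPi n ((· + v) ⁻¹' (Bᶜ \ H))) := by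
          exact add_le_add (add_le_add_right cmp2 _) (add_le_add_left cmp1 _)
    _ = (stdGaussianPi n (B ∩ H) + stdGaussianPi n (B \ H))
        + (stdGaussianPi n ((· + v) ⁻¹' (Bᶜ ∩ H))
            + stdGaussianPi n ((· + v) ⁻¹' (Bᶜ \ H))) := by ring
    _ = stdGaussianPi n B + stdGaussianPi n ((· + v) ⁻¹' Bᶜ) := by
          rw [split1, ← hpre_inter, ← hpre_diff, split2]

end Aux4
section Aux5

open Real

lemma sum_sq_nnreal {n : ℕ} (v : Fin n → ℝ) (hv : (0:ℝ) < ∑ i, v i ^ 2) :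
    ((∑ i, (⟨v i ^ 2, sq_nonneg _⟩ : ℝ≥0) : ℝ≥0) : ℝ) = ∑ i, v i ^ 2
      ∧ (∑ i, (⟨v i ^ 2, sq_nonneg _⟩ : ℝ≥0) : ℝ≥0) ≠ 0 := by
  have h1 : ((∑ i, (⟨v i ^ 2, sq_nonneg _⟩ : ℝ≥0) : ℝ≥0) : ℝ) = ∑ i, v i ^ 2 := by
    push_cast
    exact NNReal.coe_sum ..
  refine ⟨h1, fun h0 => ?_⟩
  rw [h0] at h1
  simp at h1
  rw [← h1] at hv
  exact lt_irrefl 0 hv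

lemma stdGaussianPi_Iio_val {n : ℕ} (v : Fin n → ℝ) (hv : (0:ℝ) < ∑ i, v i ^ 2) :
    stdGaussianPi n {z | (∑ i, v i * z i) ∈ Set.Iio (-(∑ i, v i ^ 2) / 2)}
      = gaussianReal 0 1 (Set.Iic (-Real.sqrt (∑ i, v i ^ 2) / 2)) := by
  obtain ⟨h1, h2⟩ := sum_sq_nnreal v hv
  rw [stdGaussianPi_linComb_mem v measurableSet_Iio, gaussianReal_Iio_eq_Iic 0 h2,
    show -(∑ i, v i ^ 2) / 2 = -((∑ i, (⟨v i ^ 2, sq_nonneg _⟩ : ℝ≥0) : ℝ≥0) : ℝ) / 2 by rw [h1],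
    gaussianReal_Iic_negHalf _ h2, h1]

lemma stdGaussianPi_Ici_val {n : ℕ} (v : Fin n → ℝ) (hv : (0:ℝ) < ∑ i, v i ^ 2) :
    stdGaussianPi n {z | (∑ i, v i * z i) ∈ Set.Ici ((∑ i, v i ^ 2) / 2)}
      = gaussianReal 0 1 (Set.Iic (-Real.sqrt (∑ i, v i ^ 2) / 2)) := by
  obtain ⟨h1, h2⟩ := sum_sq_nnreal v hv
  rw [stdGaussianPi_linComb_mem v measurableSet_Ici,
    show (∑ i, v i ^ 2) / 2 = ((∑ i, (⟨v i ^ 2, sq_nonneg _⟩ : ℝ≥0) : ℝ≥0) : ℝ) / 2 by rw [h1],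
    gaussianReal_Ici_half _ h2, h1]

end Aux5
/-- Anderson's lemma on the Bayes error rate: every measurable classifier has
error rate at least `Φ(-√S / 2)` where `S = uᵀ Cov⁻¹ u`, `u = μ₁ - μ₂`; consequently the Bayes
error rate under 0-1 loss equals `Φ(-√S / 2)`. -/
theorem bayes_error_rate_gaussianMixture
    (p : ℕ) (hp : 1 ≤ p) (μ₁ μ₂ : Fin p → ℝ)
    (Cov : Matrix (Fin p) (Fin p) ℝ) (hCov : Cov.PosDef) :
    (∀ g : (Fin p → ℝ) → Bool, Measurable g →
        stdNormalCDF (- Real.sqrt ((μ₁ - μ₂) ⬝ᵥ Cov⁻¹.mulVec (μ₁ - μ₂)) / 2)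
          ≤ mixtureErrorRate μ₁ μ₂ Cov hCov.posSemidef g)
      ∧ sInf {e : ℝ | ∃ g : (Fin p → ℝ) → Bool, Measurable g
            ∧ e = mixtureErrorRate μ₁ μ₂ Cov hCov.posSemidef g}
          = stdNormalCDF (- Real.sqrt ((μ₁ - μ₂) ⬝ᵥ Cov⁻¹.mulVec (μ₁ - μ₂)) / 2) := by
  classical
  set u : Fin p → ℝ := μ₁ - μ₂ with hu
  set A : Matrix (Fin p) (Fin p) ℝ := (hCov.posSemidef.1.eigenvectorUnitary : Matrix (Fin p) (Fin p) ℝ) *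
    diagonal ((RCLike.ofReal : ℝ → ℝ) ∘ (Real.sqrt ∘ hCov.posSemidef.1.eigenvalues)) *
    (star hCov.posSemidef.1.eigenvectorUnitary : Matrix (Fin p) (Fin p) ℝ) with hA
  have hAA : A * A = Cov := by
    have hU : (star hCov.posSemidef.1.eigenvectorUnitary : Matrix (Fin p) (Fin p) ℝ) *
        (hCov.posSemidef.1.eigenvectorUnitary : Matrix (Fin p) (Fin p) ℝ) = 1 :=
      Unitary.coe_star_mul_self _
    have hD : diagonal ((RCLike.ofReal : ℝ → ℝ) ∘ (Real.sqrt ∘ hCov.posSemidef.1.eigenvalues)) *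
        diagonal ((RCLike.ofReal : ℝ → ℝ) ∘ (Real.sqrt ∘ hCov.posSemidef.1.eigenvalues))
        = diagonal ((RCLike.ofReal : ℝ → ℝ) ∘ hCov.posSemidef.1.eigenvalues) := by
      rw [diagonal_mul_diagonal]
      congr 1; funext i
      simp only [Function.comp_apply, RCLike.ofReal_real_eq_id, id]
      exact Real.mul_self_sqrt (hCov.posSemidef.eigenvalues_nonneg i)
    conv_rhs => rw [hCov.posSemidef.1.spectral_theorem, Unitary.conjStarAlgAut_apply]
    rw [hA, ← hD]
    simp only [Matrix.mul_assoc]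
    have hU' : ∀ M : Matrix (Fin p) (Fin p) ℝ,
        (star hCov.posSemidef.1.eigenvectorUnitary : Matrix (Fin p) (Fin p) ℝ) *
        ((hCov.posSemidef.1.eigenvectorUnitary : Matrix (Fin p) (Fin p) ℝ) * M) = M := by
      intro M; rw [← Matrix.mul_assoc, hU, Matrix.one_mul]
    rw [hU']
  have hermA : A.IsHermitian := by
    rw [hA, IsHermitian, conjTranspose_mul, conjTranspose_mul, diagonal_conjTranspose,
      Matrix.star_eq_conjTranspose, conjTranspose_conjTranspose]
    simp [Matrix.mul_assoc]
  have hAT : Aᵀ = A := by simpa using hermA.eq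
  have hdet : IsUnit A.det := by
    have h1 : A.det * A.det = Cov.det := by rw [← Matrix.det_mul, hAA]
    have h2 : (0:ℝ) < Cov.det := hCov.det_pos
    refine isUnit_iff_ne_zero.mpr fun h0 => ?_
    rw [h0, mul_zero] at h1
    rw [← h1] at h2
    exact lt_irrefl 0 h2
  have hAinv : A * A⁻¹ = 1 := Matrix.mul_nonsing_inv A hdet
  have hCovInv : Cov⁻¹ = A⁻¹ * A⁻¹ := by rw [← hAA, Matrix.mul_inv_rev]
  have hAinvT : A⁻¹ᵀ = A⁻¹ := by rw [Matrix.transpose_nonsing_inv, hAT]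
  set v : Fin p → ℝ := A⁻¹.mulVec u with hv
  have hAv : A.mulVec v = u := by rw [hv, Matrix.mulVec_mulVec, hAinv, Matrix.one_mulVec]
  set SR : ℝ := u ⬝ᵥ Cov⁻¹.mulVec u with hSRdef
  have hSReq : ∑ i, v i ^ 2 = SR := by
    have h1 : v ⬝ᵥ v = SR := by
      rw [hSRdef, hCovInv, ← Matrix.mulVec_mulVec, Matrix.dotProduct_mulVec,
        ← Matrix.mulVec_transpose, hAinvT, ← hv, dotProduct_comm]
    rw [← h1]
    simp [dotProduct, sq]
  haveI hγprob : IsProbabilityMeasure (stdGaussianPi p) := by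
    rw [stdGaussianPi]; infer_instance
  have hmeasAff : ∀ μ0 : Fin p → ℝ, Measurable fun z : Fin p → ℝ => μ0 + A.mulVec z := by
    intro μ0
    have hmv : Measurable fun z : Fin p → ℝ => A.mulVec z := by
      apply measurable_pi_lambda
      intro i
      simp only [Matrix.mulVec, dotProduct]
      exact Finset.measurable_sum _ fun j _ => (measurable_pi_apply j).const_mul _
    exact measurable_const.add hmv
  haveI hm1prob : IsProbabilityMeasure (multivariateGaussian μ₁ Cov hCov.posSemidef) := by
    rw [_root_.multivariateGaussian]
    exact Measure.isProbabilityMeasure_map (hmeasAff μ₁).aemeasurable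
  haveI hm2prob : IsProbabilityMeasure (multivariateGaussian μ₂ Cov hCov.posSemidef) := by
    rw [_root_.multivariateGaussian]
    exact Measure.isProbabilityMeasure_map (hmeasAff μ₂).aemeasurable
  have hshift : ∀ z : Fin p → ℝ, μ₂ + A.mulVec (z + v) = μ₁ + A.mulVec z := by
    intro z
    rw [Matrix.mulVec_add, hAv, hu]
    abel
  have hsumv : ∀ z : Fin p → ℝ, (∑ i, v i * (z + v) i) = (∑ i, v i * z i) + ∑ i, v i ^ 2 := by
    intro z
    rw [← Finset.sum_add_distrib]
    refine Finset.sum_congr rfl fun i _ => ?_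
    simp only [Pi.add_apply]
    ring
  have hset1 : ∀ g : (Fin p → ℝ) → Bool, Measurable g →
      MeasurableSet {x : Fin p → ℝ | g x ≠ true} := by
    intro g hg
    have h : {x : Fin p → ℝ | g x ≠ true} = (g ⁻¹' {true})ᶜ := by ext x; simp
    rw [h]
    exact (hg (measurableSet_singleton true)).compl
  have hset2 : ∀ g : (Fin p → ℝ) → Bool, Measurable g →
      MeasurableSet {x : Fin p → ℝ | g x ≠ false} := by
    intro g hg
    have h : {x : Fin p → ℝ | g x ≠ false} = (g ⁻¹' {false})ᶜ := by ext x; simp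
    rw [h]
    exact (hg (measurableSet_singleton false)).compl
  by_cases hu0 : u = 0
  · -- degenerate case μ₁ = μ₂
    have hμeq : μ₁ = μ₂ := by rwa [hu, sub_eq_zero] at hu0
    have hSR0 : SR = 0 := by rw [hSRdef, hu0]; simp
    have hΦhalf : stdNormalCDF (-Real.sqrt SR / 2) = 1 / 2 := by
      rw [hSR0, Real.sqrt_zero, neg_zero, zero_div, stdNormalCDF]
      have hIci : gaussianReal 0 1 (Set.Ici (0:ℝ)) = gaussianReal 0 1 (Set.Iic (0:ℝ)) := by
        rw [gaussianReal_reflect, neg_zero]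
      have hIoi : gaussianReal 0 1 (Set.Ioi (0:ℝ)) = gaussianReal 0 1 (Set.Ici (0:ℝ)) := by
        have h : Set.Ici (0:ℝ) = Set.Ioi 0 ∪ {0} := by
          ext x; simp [le_iff_lt_or_eq, Or.comm, eq_comm]
        rw [h, measure_union (by simp) (measurableSet_singleton 0),
          gaussianReal_singleton 0 one_ne_zero 0, add_zero]
      have hcompl : gaussianReal 0 1 (Set.Iic (0:ℝ)) + gaussianReal 0 1 (Set.Ioi (0:ℝ)) = 1 := by
        have := measure_add_measure_compl (μ := gaussianReal 0 1) (measurableSet_Iic (a := (0:ℝ)))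
        rwa [Set.compl_Iic, measure_univ] at this
      rw [hIoi, hIci] at hcompl
      have htr : (gaussianReal 0 1 (Set.Iic (0:ℝ))).toReal
          + (gaussianReal 0 1 (Set.Iic (0:ℝ))).toReal = 1 := by
        rw [← ENNReal.toReal_add (measure_ne_top _ _) (measure_ne_top _ _), hcompl]
        simp
      linarith
    have hrate : ∀ g : (Fin p → ℝ) → Bool, Measurable g →
        mixtureErrorRate μ₁ μ₂ Cov hCov.posSemidef g = 1 / 2 := by
      intro g hg
      rw [mixtureErrorRate, hμeq]
      have hS : MeasurableSet {x : Fin p → ℝ | g x = true} := hg (measurableSet_singleton true)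
      have h1 : {x : Fin p → ℝ | g x ≠ true} = {x : Fin p → ℝ | g x = true}ᶜ := rfl
      have h2 : {x : Fin p → ℝ | g x ≠ false} = {x : Fin p → ℝ | g x = true} := by ext x; simp
      rw [h1, h2]
      have hsum := measure_add_measure_compl (μ := multivariateGaussian μ₂ Cov hCov.posSemidef) hS
      rw [measure_univ] at hsum
      have htr : (multivariateGaussian μ₂ Cov hCov.posSemidef {x | g x = true}).toReal
          + (multivariateGaussian μ₂ Cov hCov.posSemidef ({x | g x = true}ᶜ)).toReal = 1 := by
        rw [← ENNReal.toReal_add (measure_ne_top _ _) (measure_ne_top _ _), hsum]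
        simp
      linarith
    constructor
    · intro g hg
      rw [hrate g hg, hΦhalf]
    · have hE : {e : ℝ | ∃ g : (Fin p → ℝ) → Bool, Measurable g
          ∧ e = mixtureErrorRate μ₁ μ₂ Cov hCov.posSemidef g} = {(1:ℝ)/2} := by
        ext e
        simp only [Set.mem_setOf_eq, Set.mem_singleton_iff]
        constructor
        · rintro ⟨g, hg, rfl⟩
          exact hrate g hg
        · rintro rfl
          exact ⟨fun _ => true, measurable_const, (hrate _ measurable_const).symm⟩
      rw [hE, csInf_singleton, hΦhalf]
  · -- main case u ≠ 0
    have hSRpos : (0:ℝ) < SR := by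
      rw [hSRdef]
      have := hCov.inv.dotProduct_mulVec_pos hu0
      simpa using this
    have hvpos : (0:ℝ) < ∑ i, v i ^ 2 := by rw [hSReq]; exact hSRpos
    have hΦdef : stdNormalCDF (-Real.sqrt SR / 2)
        = (gaussianReal 0 1 (Set.Iic (-Real.sqrt SR / 2))).toReal := rfl
    have hbound : ∀ g : (Fin p → ℝ) → Bool, Measurable g →
        stdNormalCDF (-Real.sqrt SR / 2) ≤ mixtureErrorRate μ₁ μ₂ Cov hCov.posSemidef g := by
      intro g hg
      set B : Set (Fin p → ℝ) := (fun z => g (μ₂ + A.mulVec z)) ⁻¹' {true} with hB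
      have hBmeas : MeasurableSet B := (hg.comp (hmeasAff μ₂)) (measurableSet_singleton true)
      have hm1 : multivariateGaussian μ₁ Cov hCov.posSemidef {x | g x ≠ true}
          = stdGaussianPi p ((· + v) ⁻¹' Bᶜ) := by
        rw [_root_.multivariateGaussian, Measure.map_apply (hmeasAff μ₁) (hset1 g hg)]
        congr 1
        ext z
        simp only [Set.mem_preimage, Set.mem_compl_iff, hB, Set.mem_setOf_eq,
          Set.mem_singleton_iff]
        rw [hshift z]
      have hm2 : multivariateGaussian μ₂ Cov hCov.posSemidef {x | g x ≠ false}
          = stdGaussianPi p B := by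
        rw [_root_.multivariateGaussian, Measure.map_apply (hmeasAff μ₂) (hset2 g hg)]
        congr 1
        ext z
        simp [hB]
      have hkey := anderson_lb v hvpos hBmeas
      rw [hSReq] at hkey
      rw [mixtureErrorRate, hm1, hm2, hΦdef]
      have hne : stdGaussianPi p B + stdGaussianPi p ((· + v) ⁻¹' Bᶜ) ≠ ⊤ :=
        ENNReal.add_ne_top.mpr ⟨measure_ne_top _ _, measure_ne_top _ _⟩
      have htr := ENNReal.toReal_mono hne hkey
      rw [ENNReal.toReal_add (measure_ne_top _ _) (measure_ne_top _ _),
        ENNReal.toReal_add (measure_ne_top _ _) (measure_ne_top _ _)] at htr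
      linarith
    refine ⟨hbound, ?_⟩
    -- the optimal classifier
    set w : Fin p → ℝ := Cov⁻¹.mulVec u with hw
    have hAw : A.mulVec w = v := by
      rw [hw, Matrix.mulVec_mulVec, hCovInv, ← Matrix.mul_assoc, hAinv, Matrix.one_mul, ← hv]
    have hwu : w ⬝ᵥ u = SR := by rw [hw, hSRdef, dotProduct_comm]
    set F : (Fin p → ℝ) → ℝ := fun x => ∑ i, w i * (x i - μ₂ i) with hF
    have hFmeas : Measurable F :=
      Finset.measurable_sum _ fun i _ => ((measurable_pi_apply i).sub measurable_const).const_mul _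
    set gopt : (Fin p → ℝ) → Bool := fun x => decide (SR / 2 ≤ F x) with hgopt
    have hgopt_meas : Measurable gopt := by
      have h : gopt = fun x => if SR / 2 ≤ F x then true else false := by
        funext x
        by_cases hx : SR / 2 ≤ F x <;> simp [hgopt, hx]
      rw [h]
      exact Measurable.ite (measurableSet_le measurable_const hFmeas)
        measurable_const measurable_const
    have hFz : ∀ z : Fin p → ℝ, F (μ₂ + A.mulVec z) = ∑ i, v i * z i := by
      intro z
      rw [hF]
      simp only [Pi.add_apply]
      have h : ∀ i ∈ Finset.univ, w i * ((μ₂ i + A.mulVec z i) - μ₂ i)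
          = w i * A.mulVec z i := fun i _ => by ring
      rw [Finset.sum_congr rfl h,
        show ∑ i, w i * A.mulVec z i = w ⬝ᵥ (A.mulVec z) from rfl,
        Matrix.dotProduct_mulVec, ← hAT, Matrix.vecMul_transpose, hAw]
      rfl
    have hFz1 : ∀ z : Fin p → ℝ, F (μ₁ + A.mulVec z) = (∑ i, v i * z i) + SR := by
      intro z
      rw [← hshift z, hFz (z + v), hsumv z, hSReq]
    have he1 : multivariateGaussian μ₁ Cov hCov.posSemidef {x | gopt x ≠ true}
        = gaussianReal 0 1 (Set.Iic (-Real.sqrt SR / 2)) := by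
      rw [_root_.multivariateGaussian, Measure.map_apply (hmeasAff μ₁) (hset1 gopt hgopt_meas)]
      have h : (fun z => μ₁ + A.mulVec z) ⁻¹' {x | gopt x ≠ true}
          = {z : Fin p → ℝ | (∑ i, v i * z i) ∈ Set.Iio (-(∑ i, v i ^ 2) / 2)} := by
        ext z
        simp only [Set.mem_preimage, Set.mem_setOf_eq, hgopt, ne_eq, decide_eq_true_eq,
          Set.mem_Iio, hFz1 z, hSReq, not_le]
        constructor <;> intro h' <;> linarith
      rw [h, stdGaussianPi_Iio_val v hvpos, hSReq]
    have he2 : multivariateGaussian μ₂ Cov hCov.posSemidef {x | gopt x ≠ false}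
        = gaussianReal 0 1 (Set.Iic (-Real.sqrt SR / 2)) := by
      rw [_root_.multivariateGaussian, Measure.map_apply (hmeasAff μ₂) (hset2 gopt hgopt_meas)]
      have h : (fun z => μ₂ + A.mulVec z) ⁻¹' {x | gopt x ≠ false}
          = {z : Fin p → ℝ | (∑ i, v i * z i) ∈ Set.Ici ((∑ i, v i ^ 2) / 2)} := by
        ext z
        simp only [Set.mem_preimage, Set.mem_setOf_eq, hgopt, ne_eq, Set.mem_Ici,
          hFz z, hSReq, Bool.not_eq_false, decide_eq_true_eq]
      rw [h, stdGaussianPi_Ici_val v hvpos, hSReq]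
    have hval : mixtureErrorRate μ₁ μ₂ Cov hCov.posSemidef gopt
        = stdNormalCDF (-Real.sqrt SR / 2) := by
      rw [mixtureErrorRate, he1, he2, hΦdef]
      ring
    refine le_antisymm ?_ ?_
    · refine csInf_le ⟨stdNormalCDF (-Real.sqrt SR / 2), ?_⟩ ?_
      · rintro e ⟨g, hg, rfl⟩
        exact hbound g hg
      · exact ⟨gopt, hgopt_meas, hval.symm⟩
    · refine le_csInf ⟨_, gopt, hgopt_meas, hval.symm⟩ ?_
      rintro e ⟨g, hg, rfl⟩
      exact hbound g hg
end

section
/- Let Σ be a positive definite real matrix indexed by a finite set F, let u ∈ ℝ^F, and let F₁ ⊆ F. Let A = Σ[F₁, F₁] be the principal submatrix of Σ on F₁ and u₁ = u restricted to F₁. Then the separation induced by the subset is no larger than the full separation: u₁ᵀA⁻¹u₁ ≤ uᵀΣ⁻¹u. -/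
open Matrix

section auxSep
variable {F : Type*} [Fintype F] [DecidableEq F]

/-- Extension by zero of a vector on a subset. -/
def extz (F₁ : Finset F) (x₁ : F₁ → ℝ) : F → ℝ :=
  fun i => if h : i ∈ F₁ then x₁ ⟨i, h⟩ else 0

lemma extz_dot (F₁ : Finset F) (x₁ : F₁ → ℝ) (v : F → ℝ) :
    extz F₁ x₁ ⬝ᵥ v = x₁ ⬝ᵥ (fun i : F₁ => v i) := by
  unfold dotProduct
  have h1 : ∑ i : F, extz F₁ x₁ i * v i = ∑ i ∈ F₁, extz F₁ x₁ i * v i := by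
    symm
    apply Finset.sum_subset (Finset.subset_univ F₁)
    intro i _ hi
    simp [extz, hi]
  have h2 : ∑ i : F₁, x₁ i * v i = ∑ i ∈ F₁, extz F₁ x₁ i * v i := by
    rw [← Finset.sum_coe_sort F₁ (fun j => extz F₁ x₁ j * v j)]
    refine Finset.sum_congr rfl fun i _ => ?_
    simp [extz, i.2]
  rw [h1, h2]

lemma mulVec_extz (F₁ : Finset F) (Cov : Matrix F F ℝ) (x₁ : F₁ → ℝ) (i : F₁) :
    (Cov *ᵥ extz F₁ x₁) i =
      ((Cov.submatrix (Subtype.val : F₁ → F) Subtype.val) *ᵥ x₁) i := by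
  show (fun j : F => Cov i j) ⬝ᵥ extz F₁ x₁ = _
  rw [dotProduct_comm, extz_dot]
  show x₁ ⬝ᵥ (fun j : F₁ => Cov i j) = (fun j : F₁ => Cov i j) ⬝ᵥ x₁
  rw [dotProduct_comm]

/-- For any `w`, `2⟨w,u⟩ - wᵀ Σ w ≤ uᵀ Σ⁻¹ u`. -/
lemma key_ineq (Cov : Matrix F F ℝ) (hCov : Cov.PosDef) (u w : F → ℝ) :
    2 * (w ⬝ᵥ u) - w ⬝ᵥ Cov *ᵥ w ≤ u ⬝ᵥ Cov⁻¹ *ᵥ u := by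
  set y := Cov⁻¹ *ᵥ u with hy
  have hdet : IsUnit Cov.det := isUnit_iff_ne_zero.mpr hCov.det_pos.ne'
  have hCy : Cov *ᵥ y = u := by
    rw [hy, mulVec_mulVec, Matrix.mul_nonsing_inv _ hdet, one_mulVec]
  have hsym : Covᵀ = Cov := hCov.isHermitian
  have h0 : 0 ≤ (w - y) ⬝ᵥ Cov *ᵥ (w - y) := by
    have := hCov.posSemidef.dotProduct_mulVec_nonneg (w - y)
    simpa using this
  have hyw : y ⬝ᵥ Cov *ᵥ w = w ⬝ᵥ u := by
    rw [dotProduct_mulVec, ← mulVec_transpose, hsym, hCy, dotProduct_comm]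
  have hwy : w ⬝ᵥ Cov *ᵥ y = w ⬝ᵥ u := by rw [hCy]
  have hyy : y ⬝ᵥ Cov *ᵥ y = u ⬝ᵥ y := by rw [hCy, dotProduct_comm]
  rw [mulVec_sub, sub_dotProduct, dotProduct_sub, dotProduct_sub, hyw, hwy, hyy] at h0
  linarith

/-- A principal submatrix of a positive definite matrix is positive definite. -/
lemma posDef_submatrix (Cov : Matrix F F ℝ) (hCov : Cov.PosDef) (F₁ : Finset F) :
    (Cov.submatrix (Subtype.val : F₁ → F) Subtype.val).PosDef := by
  refine Matrix.PosDef.of_dotProduct_mulVec_pos (hCov.isHermitian.submatrix _) fun x₁ hx₁ => ?_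
  have hw : extz F₁ x₁ ≠ 0 := by
    intro h
    apply hx₁
    funext i
    have := congrFun h i.val
    simpa [extz, i.2] using this
  have hpos := hCov.dotProduct_mulVec_pos hw
  have heq : extz F₁ x₁ ⬝ᵥ Cov *ᵥ extz F₁ x₁ =
      x₁ ⬝ᵥ (Cov.submatrix (Subtype.val : F₁ → F) Subtype.val) *ᵥ x₁ := by
    rw [extz_dot]
    congr 1
    funext i
    exact mulVec_extz F₁ Cov x₁ i
  simp only [star_trivial] at hpos ⊢
  rw [← heq]
  exact hpos

end auxSep

/-- for a positive definite matrix `Cov` indexed by a finite set `F`, a vector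
`u : F → ℝ` and a subset `F₁ ⊆ F` with principal submatrix `A = Cov[F₁, F₁]` and restricted
vector `u₁`, the separation induced by the subset is no larger than the full separation:
`u₁ᵀ A⁻¹ u₁ ≤ uᵀ Cov⁻¹ u`. -/
theorem separation_submatrix_le
    {F : Type*} [Fintype F] [DecidableEq F]
    (Cov : Matrix F F ℝ) (hCov : Cov.PosDef) (u : F → ℝ) (F₁ : Finset F) :
    (fun i : F₁ => u i) ⬝ᵥ
        (Cov.submatrix (Subtype.val : F₁ → F) Subtype.val)⁻¹.mulVec (fun i : F₁ => u i)
      ≤ u ⬝ᵥ Cov⁻¹.mulVec u := by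
  set A := Cov.submatrix (Subtype.val : F₁ → F) Subtype.val with hAdef
  set u₁ : F₁ → ℝ := fun i => u i with hu₁
  have hA : A.PosDef := posDef_submatrix Cov hCov F₁
  set x₁ := A⁻¹ *ᵥ u₁ with hx₁
  have hAx : A *ᵥ x₁ = u₁ := by
    rw [hx₁, mulVec_mulVec, Matrix.mul_nonsing_inv _ (isUnit_iff_ne_zero.mpr hA.det_pos.ne'),
      one_mulVec]
  have h1 : extz F₁ x₁ ⬝ᵥ u = x₁ ⬝ᵥ u₁ := extz_dot F₁ x₁ u
  have h2 : extz F₁ x₁ ⬝ᵥ Cov *ᵥ extz F₁ x₁ = x₁ ⬝ᵥ u₁ := by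
    rw [extz_dot]
    rw [show (fun i : F₁ => (Cov *ᵥ extz F₁ x₁) i) = A *ᵥ x₁ from
      funext fun i => mulVec_extz F₁ Cov x₁ i, hAx]
  have hk := key_ineq Cov hCov u (extz F₁ x₁)
  rw [h1, h2] at hk
  have hgoal : u₁ ⬝ᵥ A⁻¹ *ᵥ u₁ = x₁ ⬝ᵥ u₁ := dotProduct_comm _ _
  calc u₁ ⬝ᵥ A⁻¹ *ᵥ u₁ = x₁ ⬝ᵥ u₁ := hgoal
    _ ≤ u ⬝ᵥ Cov⁻¹ *ᵥ u := by linarith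
end

section
/- Let Σ be a positive definite real matrix indexed by a finite set F, let u ∈ ℝ^F with u ≠ 0, and let F₁ ⊆ F with A = Σ[F₁, F₁] and u₁ the restriction of u to F₁. Then the ratio of separation γ = S_{F₁}/S_F satisfies the deterministic lower bound γ ≥ (λ_min(Σ⁻¹)/λ_max(Σ⁻¹)) · (‖u₁‖²/‖u‖²). -/
open Matrix

lemma spec_decomp {n : Type*} [Fintype n] [DecidableEq n] {M : Matrix n n ℝ}
    (hM : M.PosDef) (x : n → ℝ) :
    ∃ y : n → ℝ, (∑ i, y i ^ 2 = ∑ i, x i ^ 2) ∧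
      x ⬝ᵥ M.mulVec x = ∑ i, hM.1.eigenvalues i * y i ^ 2 ∧
      x ⬝ᵥ M⁻¹.mulVec x = ∑ i, (hM.1.eigenvalues i)⁻¹ * y i ^ 2 := by
  classical
  set U : Matrix n n ℝ := (IsHermitian.eigenvectorUnitary hM.1 : Matrix n n ℝ) with hU
  set ev : n → ℝ := hM.1.eigenvalues with hev
  have hevpos : ∀ i, 0 < ev i := fun i => hM.eigenvalues_pos i
  have hU1 : U * star U = 1 := Matrix.mem_unitaryGroup_iff.mp (IsHermitian.eigenvectorUnitary hM.1).2
  have hU2 : star U * U = 1 := Matrix.mem_unitaryGroup_iff'.mp (IsHermitian.eigenvectorUnitary hM.1).2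
  set y : n → ℝ := star U *ᵥ x with hy
  have hyU : y = x ᵥ* U := by
    rw [hy, Matrix.star_eq_conjTranspose, Matrix.conjTranspose_eq_transpose_of_trivial,
      Matrix.mulVec_transpose]
  have key : ∀ d : n → ℝ, x ⬝ᵥ (U * diagonal d * star U) *ᵥ x = ∑ i, d i * y i ^ 2 := by
    intro d
    rw [← Matrix.mulVec_mulVec, ← Matrix.mulVec_mulVec, Matrix.dotProduct_mulVec, ← hyU, ← hy]
    simp only [dotProduct, Matrix.mulVec_diagonal]
    exact Finset.sum_congr rfl fun i _ => by ring
  have hnorm : ∑ i, y i ^ 2 = ∑ i, x i ^ 2 := by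
    have : y ⬝ᵥ y = x ⬝ᵥ x := by
      nth_rewrite 1 [hyU]
      rw [hy, ← Matrix.dotProduct_mulVec, Matrix.mulVec_mulVec, hU1, Matrix.one_mulVec]
    simpa [dotProduct, pow_two] using this
  have hspec : M = U * diagonal ev * star U := by
    have := hM.1.spectral_theorem
    simpa using this
  have h1 : (fun i => ev i * (ev i)⁻¹) = fun _ : n => (1:ℝ) :=
    funext fun i => mul_inv_cancel₀ (hevpos i).ne'
  have hDD : diagonal ev * diagonal (fun i => (ev i)⁻¹) = 1 := by
    rw [Matrix.diagonal_mul_diagonal, h1, Matrix.diagonal_one]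
  have hinv : M⁻¹ = U * diagonal (fun i => (ev i)⁻¹) * star U := by
    apply Matrix.inv_eq_right_inv
    rw [hspec]
    calc U * diagonal ev * star U * (U * diagonal (fun i => (ev i)⁻¹) * star U)
        = U * diagonal ev * (star U * U) * (diagonal (fun i => (ev i)⁻¹) * star U) := by
          simp only [Matrix.mul_assoc]
      _ = 1 := by rw [hU2, Matrix.mul_one, Matrix.mul_assoc, ← Matrix.mul_assoc (diagonal ev), hDD,
          Matrix.one_mul, hU1]
  exact ⟨y, hnorm, by rw [hspec]; exact key _, by rw [hinv]; exact key _⟩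

lemma ext_dot {F : Type*} [Fintype F] [DecidableEq F] (F₁ : Finset F) (x : F₁ → ℝ) (f : F → ℝ) :
    ∑ j, (if h : j ∈ F₁ then x ⟨j, h⟩ else 0) * f j = ∑ i : F₁, x i * f ↑i := by
  classical
  rw [← Finset.sum_subset (Finset.subset_univ F₁)
    (fun j _ hj => by rw [dif_neg hj, zero_mul]), ← Finset.sum_coe_sort]
  exact Finset.sum_congr rfl fun i _ => by rw [dif_pos i.2]

lemma ext_quad {F : Type*} [Fintype F] [DecidableEq F] (F₁ : Finset F)
    (Cov : Matrix F F ℝ) (x : F₁ → ℝ) :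
    x ⬝ᵥ (Cov.submatrix (Subtype.val : F₁ → F) Subtype.val).mulVec x
      = (fun j => if h : j ∈ F₁ then x ⟨j, h⟩ else 0) ⬝ᵥ
          Cov.mulVec (fun j => if h : j ∈ F₁ then x ⟨j, h⟩ else 0) := by
  classical
  set e : F → ℝ := fun j => if h : j ∈ F₁ then x ⟨j, h⟩ else 0 with he
  have h1 : ∀ f : F → ℝ, ∑ j, e j * f j = ∑ i : F₁, x i * f ↑i := fun f => ext_dot F₁ x f
  have h2 : ∀ j, ∑ k, Cov j k * e k = ∑ i' : F₁, Cov j ↑i' * x i' := by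
    intro j
    calc ∑ k, Cov j k * e k = ∑ k, e k * Cov j k :=
          Finset.sum_congr rfl fun k _ => mul_comm _ _
      _ = ∑ i' : F₁, x i' * Cov j ↑i' := h1 _
      _ = ∑ i' : F₁, Cov j ↑i' * x i' := Finset.sum_congr rfl fun k _ => mul_comm _ _
  calc x ⬝ᵥ (Cov.submatrix (Subtype.val : F₁ → F) Subtype.val).mulVec x
      = ∑ i : F₁, x i * ∑ i' : F₁, Cov ↑i ↑i' * x i' := by
        simp only [dotProduct, Matrix.mulVec, Matrix.submatrix_apply]
    _ = ∑ i : F₁, x i * ∑ k, Cov ↑i k * e k :=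
        Finset.sum_congr rfl fun i _ => by rw [h2]
    _ = e ⬝ᵥ Cov.mulVec e := by
        have : e ⬝ᵥ Cov.mulVec e = ∑ j, e j * ∑ k, Cov j k * e k := by
          simp only [dotProduct, Matrix.mulVec]
        rw [this, h1]

lemma euclid_norm_sq {ι : Type*} [Fintype ι] (v : ι → ℝ) :
    ‖(WithLp.equiv 2 (ι → ℝ)).symm v‖ ^ 2 = ∑ i, v i ^ 2 := by
  rw [EuclideanSpace.norm_eq, Real.sq_sqrt (by positivity)]
  exact Finset.sum_congr rfl fun i _ => by
    rw [WithLp.equiv_symm_apply, PiLp.toLp_apply, Real.norm_eq_abs, sq_abs]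

/-- for a positive definite matrix `Cov` indexed by a finite set `F`, `u ≠ 0` and a
subset `F₁ ⊆ F` with principal submatrix `A = Cov[F₁, F₁]` and restricted vector `u₁`, the ratio
of separation `γ = S_{F₁} / S_F` satisfies the deterministic lower bound
`γ ≥ (λ_min(Cov⁻¹) / λ_max(Cov⁻¹)) · (‖u₁‖² / ‖u‖²)`. -/
theorem ratio_of_separation_lower_bound
    {F : Type*} [Fintype F] [DecidableEq F]
    (Cov : Matrix F F ℝ) (hCov : Cov.PosDef) (u : F → ℝ) (hu : u ≠ 0) (F₁ : Finset F) :
    ((⨅ i, hCov.1.inv.eigenvalues i) / (⨆ i, hCov.1.inv.eigenvalues i))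
        * (‖(WithLp.equiv 2 (F₁ → ℝ)).symm (fun i : F₁ => u i)‖ ^ 2
            / ‖(WithLp.equiv 2 (F → ℝ)).symm u‖ ^ 2)
      ≤ ((fun i : F₁ => u i) ⬝ᵥ
            (Cov.submatrix (Subtype.val : F₁ → F) Subtype.val)⁻¹.mulVec (fun i : F₁ => u i))
          / (u ⬝ᵥ Cov⁻¹.mulVec u) := by
  classical
  obtain ⟨i₀, hi₀⟩ := Function.ne_iff.mp hu
  haveI : Nonempty F := ⟨i₀⟩
  have hM : (Cov⁻¹).PosDef := hCov.inv
  have heig : hCov.1.inv.eigenvalues = hM.1.eigenvalues := rfl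
  rw [euclid_norm_sq, euclid_norm_sq, heig]
  set ev : F → ℝ := hM.1.eigenvalues with hev
  set lam := ⨅ i, ev i with hlam
  set Lam := ⨆ i, ev i with hLam
  have hbddA : BddAbove (Set.range ev) := Set.Finite.bddAbove (Set.finite_range _)
  have hbddB : BddBelow (Set.range ev) := Set.Finite.bddBelow (Set.finite_range _)
  have hlam_le : ∀ j, lam ≤ ev j := fun j => ciInf_le hbddB j
  have hle_Lam : ∀ j, ev j ≤ Lam := fun j => le_ciSup hbddA j
  have hlam_pos : 0 < lam := by
    obtain ⟨j, hj⟩ := exists_eq_ciInf_of_finite (f := ev)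
    rw [hlam, ← hj]; exact hM.eigenvalues_pos j
  have hN_pos : 0 < ∑ i, u i ^ 2 :=
    Finset.sum_pos' (fun i _ => sq_nonneg _) ⟨i₀, Finset.mem_univ _, by have h : u i₀ ≠ 0 := hi₀; positivity⟩
  have hS_pos : 0 < u ⬝ᵥ Cov⁻¹.mulVec u := by
    have := hM.dotProduct_mulVec_pos hu
    simpa using this
  have hS_le : u ⬝ᵥ Cov⁻¹.mulVec u ≤ Lam * ∑ i, u i ^ 2 := by
    obtain ⟨y, hy, hq, -⟩ := spec_decomp hM u
    calc u ⬝ᵥ Cov⁻¹.mulVec u = ∑ i, ev i * y i ^ 2 := hq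
      _ ≤ ∑ i, Lam * y i ^ 2 :=
          Finset.sum_le_sum fun i _ => mul_le_mul_of_nonneg_right (hle_Lam i) (sq_nonneg _)
      _ = Lam * ∑ i, y i ^ 2 := (Finset.mul_sum _ _ _).symm
      _ = Lam * ∑ i, u i ^ 2 := by rw [hy]
  have hCovinv : (Cov⁻¹)⁻¹ = Cov :=
    Matrix.nonsing_inv_nonsing_inv Cov (isUnit_iff_ne_zero.mpr hCov.det_pos.ne')
  have key : lam * ∑ i : F₁, (u ↑i) ^ 2 ≤ (fun i : F₁ => u ↑i) ⬝ᵥ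
      (Cov.submatrix (Subtype.val : F₁ → F) Subtype.val)⁻¹.mulVec (fun i : F₁ => u ↑i) := by
    rcases isEmpty_or_nonempty F₁ with hF | hF
    · simp [dotProduct]
    · set A := Cov.submatrix (Subtype.val : F₁ → F) Subtype.val with hA'
      have hApd : A.PosDef := by
        refine Matrix.PosDef.of_dotProduct_mulVec_pos (hCov.1.submatrix _) fun {x} hx => ?_
        have hex : (fun j => if h : j ∈ F₁ then x ⟨j, h⟩ else 0) ≠ (0 : F → ℝ) := by
          intro h0
          apply hx
          funext i
          have := congrFun h0 ↑i
          simpa [dif_pos i.2] using this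
        have h2 := hCov.dotProduct_mulVec_pos hex
        have hq := ext_quad F₁ Cov x
        simp only [star_trivial] at h2 ⊢
        rw [hq]
        simpa using h2
      have hAlt : ∀ j, hApd.1.eigenvalues j ≤ lam⁻¹ := by
        intro j
        set v : F₁ → ℝ := ⇑(hApd.1.eigenvectorBasis j) with hv'
        have hvnorm : ∑ i, v i ^ 2 = 1 := by
          have h1 : ‖hApd.1.eigenvectorBasis j‖ = 1 := hApd.1.eigenvectorBasis.orthonormal.1 j
          have h2 : ‖hApd.1.eigenvectorBasis j‖ ^ 2 = ∑ i, v i ^ 2 := by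
            rw [EuclideanSpace.norm_eq, Real.sq_sqrt (by positivity)]
            refine Finset.sum_congr rfl fun i _ => ?_
            rw [Real.norm_eq_abs, sq_abs]
          rw [← h2, h1, one_pow]
        have heq : hApd.1.eigenvalues j = v ⬝ᵥ A.mulVec v := by
          have := hApd.1.eigenvalues_eq j
          simpa using this
        have hcovq := ext_quad F₁ Cov v
        obtain ⟨y, hy, -, hqinv⟩ := spec_decomp hM (fun j => if h : j ∈ F₁ then v ⟨j, h⟩ else 0)
        rw [hCovinv] at hqinv
        have he_sq : ∑ k, (if h : k ∈ F₁ then v ⟨k, h⟩ else 0) ^ 2 = ∑ i, v i ^ 2 := by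
          have h1 : ∑ k, (if h : k ∈ F₁ then v ⟨k, h⟩ else 0) ^ 2
              = ∑ k, (if h : k ∈ F₁ then v ⟨k, h⟩ else 0) * (fun k => if h : k ∈ F₁ then v ⟨k, h⟩ else 0) k := by
            exact Finset.sum_congr rfl fun k _ => by by_cases h : k ∈ F₁ <;> simp [h, pow_two]
          rw [h1, ext_dot F₁ v]
          exact Finset.sum_congr rfl fun i _ => by simp [dif_pos i.2, pow_two]
        calc hApd.1.eigenvalues j = v ⬝ᵥ A.mulVec v := heq
          _ = _ ⬝ᵥ Cov.mulVec _ := hcovq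
          _ = ∑ i, (ev i)⁻¹ * y i ^ 2 := hqinv
          _ ≤ ∑ i, lam⁻¹ * y i ^ 2 := Finset.sum_le_sum fun i _ =>
              mul_le_mul_of_nonneg_right (inv_anti₀ hlam_pos (hlam_le i)) (sq_nonneg _)
          _ = lam⁻¹ * ∑ i, y i ^ 2 := (Finset.mul_sum _ _ _).symm
          _ = lam⁻¹ := by rw [hy, he_sq, hvnorm, mul_one]
      obtain ⟨y, hy, -, hqinv⟩ := spec_decomp hApd (fun i : F₁ => u ↑i)
      calc lam * ∑ i : F₁, (u ↑i) ^ 2 = lam * ∑ i, y i ^ 2 := by rw [hy]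
        _ = ∑ i, lam * y i ^ 2 := Finset.mul_sum _ _ _
        _ ≤ ∑ i, (hApd.1.eigenvalues i)⁻¹ * y i ^ 2 := by
            refine Finset.sum_le_sum fun i _ => mul_le_mul_of_nonneg_right ?_ (sq_nonneg _)
            have := inv_anti₀ (hApd.eigenvalues_pos i) (hAlt i)
            rwa [inv_inv] at this
        _ = _ := hqinv.symm
  have hS₁_nonneg : (0:ℝ) ≤ (fun i : F₁ => u ↑i) ⬝ᵥ
      (Cov.submatrix (Subtype.val : F₁ → F) Subtype.val)⁻¹.mulVec (fun i : F₁ => u ↑i) :=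
    le_trans (by positivity) key
  rw [div_mul_div_comm]
  exact div_le_div₀ hS₁_nonneg key hS_pos hS_le
end

section
/- (Thinning preserves the ratio of separation, quantitative version of Theorem 1.) For each p, let Σ_p be a p×p positive definite real matrix and u_p ∈ ℝᵖ, and suppose there exist constants M > 0, c > 0 and K ≥ 1, independent of p, such that |u_{p,i}| ≤ M for all i, ‖u_p‖² ≥ c·p, and λ_max(Σ_p⁻¹)/λ_min(Σ_p⁻¹) ≤ K. Let F₁ be a random subset of {1, …, p} obtained by including each coordinate independently with probability 1/2, and let γ_p = S_{F₁}/S_F be the ratio of separation of F₁. Then for every ε with 0 < ε < 1/2, P( γ_p ≥ (1/2 − ε)/K ) → 1 as p → ∞. -/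
open MeasureTheory Matrix
open scoped ENNReal NNReal

/-- The Bernoulli law on `Bool` with success probability `r`. -/
noncomputable def bernoulliBoolLaw (r : ℝ≥0∞) : Measure Bool :=
  r • Measure.dirac true + (1 - r) • Measure.dirac false

/-- The law of a random subset of `{1, …, p}` (encoded by its indicator in `Fin p → Bool`)
obtained by including each coordinate independently with probability `r`. -/
noncomputable def thinningMeasure (p : ℕ) (r : ℝ≥0∞) : Measure (Fin p → Bool) :=
  Measure.pi fun _ => bernoulliBoolLaw r

/-- The separation `S_F = uᵀ Cov⁻¹ u` of the full feature set. -/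
noncomputable def separation {n : Type*} [Fintype n] [DecidableEq n]
    (Cov : Matrix n n ℝ) (u : n → ℝ) : ℝ :=
  u ⬝ᵥ Cov⁻¹.mulVec u

/-- The separation `S_{F₁} = u₁ᵀ A⁻¹ u₁` induced by a feature subset `F₁`, where `A` is the
principal submatrix of `Cov` on `F₁` and `u₁` the restriction of `u` (it is `0` if `F₁ = ∅`). -/
noncomputable def subSeparation {n : Type*} [Fintype n] [DecidableEq n]
    (Cov : Matrix n n ℝ) (u : n → ℝ) (s : Finset n) : ℝ :=
  separation (Cov.submatrix (Subtype.val : s → n) Subtype.val) (fun i => u i)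

set_option linter.unusedSectionVars false
set_option maxHeartbeats 1000000

/-! ### Auxiliary matrix lemmas -/

section MatrixLemmas
variable {n : Type*} [Fintype n] [DecidableEq n]

lemma aux_dot_symm {A : Matrix n n ℝ} (hA : A.IsHermitian) (x y : n → ℝ) :
    x ⬝ᵥ A *ᵥ y = y ⬝ᵥ A *ᵥ x := by
  rw [dotProduct_mulVec x, ← mulVec_transpose, dotProduct_comm]
  congr 2

lemma aux_cs_bilinear {A : Matrix n n ℝ} (hA : A.PosSemidef) (x y : n → ℝ) :
    (x ⬝ᵥ A *ᵥ y) ^ 2 ≤ (x ⬝ᵥ A *ᵥ x) * (y ⬝ᵥ A *ᵥ y) := by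
  have key : ∀ t : ℝ, 0 ≤ (y ⬝ᵥ A *ᵥ y) * (t * t) + (2 * (x ⬝ᵥ A *ᵥ y)) * t
      + (x ⬝ᵥ A *ᵥ x) := by
    intro t
    have h := hA.dotProduct_mulVec_nonneg (x + t • y)
    have hsym := aux_dot_symm hA.1 y x
    simp only [star_trivial, mulVec_add, mulVec_smul, dotProduct_add, add_dotProduct,
      dotProduct_smul, smul_dotProduct, smul_eq_mul] at h
    rw [hsym] at h
    nlinarith [h]
  have h2 := discrim_le_zero key
  rw [discrim] at h2
  nlinarith [h2]

lemma aux_cs_inv {A : Matrix n n ℝ} (hA : A.PosDef) (x : n → ℝ) :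
    (x ⬝ᵥ x) ^ 2 ≤ (x ⬝ᵥ A *ᵥ x) * (x ⬝ᵥ A⁻¹ *ᵥ x) := by
  have hinv : A *ᵥ (A⁻¹ *ᵥ x) = x := by
    rw [mulVec_mulVec, Matrix.mul_nonsing_inv _ hA.det_pos.ne'.isUnit, one_mulVec]
  have h := aux_cs_bilinear hA.posSemidef x (A⁻¹ *ᵥ x)
  rw [hinv, dotProduct_comm (A⁻¹ *ᵥ x) x] at h
  exact h

lemma aux_quad_repr {B : Matrix n n ℝ} (hB : B.IsHermitian) (x : n → ℝ) :
    ∃ y : n → ℝ, x ⬝ᵥ B *ᵥ x = (∑ i, hB.eigenvalues i * y i ^ 2) ∧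
      x ⬝ᵥ x = ∑ i, y i ^ 2 := by
  set U : Matrix n n ℝ := (hB.eigenvectorUnitary : Matrix n n ℝ) with hU
  have hUs : U * star U = 1 := Matrix.mem_unitaryGroup_iff.mp hB.eigenvectorUnitary.2
  have hsU : (star U)ᵀ = U := by
    rw [Matrix.star_eq_conjTranspose, ← Matrix.conjTranspose_eq_transpose_of_trivial,
      conjTranspose_conjTranspose]
  refine ⟨star U *ᵥ x, ?_, ?_⟩
  · conv_lhs => rw [hB.spectral_theorem, Unitary.conjStarAlgAut_apply]
    rw [← mulVec_mulVec, ← mulVec_mulVec, dotProduct_mulVec x, ← mulVec_transpose,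
      ← Matrix.conjTranspose_eq_transpose_of_trivial, ← Matrix.star_eq_conjTranspose]
    simp only [dotProduct, Matrix.mulVec_diagonal, Function.comp_apply, RCLike.ofReal_real_eq_id,
      id_eq]
    exact Finset.sum_congr rfl fun i _ => by ring
  · have key : (star U *ᵥ x) ⬝ᵥ (star U *ᵥ x) = x ⬝ᵥ x := by
      rw [dotProduct_mulVec (star U *ᵥ x) (star U) x, ← mulVec_transpose, mulVec_mulVec, hsU,
        hUs, one_mulVec]
    rw [← key]
    simp only [dotProduct]
    exact Finset.sum_congr rfl fun i _ => by ring

lemma aux_ray_low {B : Matrix n n ℝ} (hB : B.IsHermitian) (x : n → ℝ) :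
    (⨅ i, hB.eigenvalues i) * (x ⬝ᵥ x) ≤ x ⬝ᵥ B *ᵥ x := by
  obtain ⟨y, h1, h2⟩ := aux_quad_repr hB x
  rw [h1, h2, Finset.mul_sum]
  refine Finset.sum_le_sum fun i _ => ?_
  exact mul_le_mul_of_nonneg_right (ciInf_le (Set.finite_range _).bddBelow i) (sq_nonneg _)

lemma aux_ray_high {B : Matrix n n ℝ} (hB : B.IsHermitian) (x : n → ℝ) :
    x ⬝ᵥ B *ᵥ x ≤ (⨆ i, hB.eigenvalues i) * (x ⬝ᵥ x) := by
  obtain ⟨y, h1, h2⟩ := aux_quad_repr hB x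
  rw [h1, h2, Finset.mul_sum]
  refine Finset.sum_le_sum fun i _ => ?_
  exact mul_le_mul_of_nonneg_right (le_ciSup (Set.finite_range _).bddAbove i) (sq_nonneg _)

/-- extension of a vector on a subset by zero -/
noncomputable def extZ (s : Finset n) (x : ↥s → ℝ) : n → ℝ :=
  fun i => if h : i ∈ s then x ⟨i, h⟩ else 0

lemma extZ_dot (s : Finset n) (x : ↥s → ℝ) (f : n → ℝ) :
    extZ s x ⬝ᵥ f = ∑ i : ↥s, x i * f i := by
  rw [dotProduct, Finset.univ_eq_attach]
  rw [← Finset.sum_subset (Finset.subset_univ s)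
    (fun i _ hi => by simp [extZ, hi])]
  rw [← Finset.sum_attach s (fun i => extZ s x i * f i)]
  exact Finset.sum_congr rfl fun i _ => by simp [extZ, i.2]

lemma extZ_quad (Cov : Matrix n n ℝ) (s : Finset n) (x : ↥s → ℝ) :
    x ⬝ᵥ (Cov.submatrix (Subtype.val : ↥s → n) Subtype.val) *ᵥ x
      = extZ s x ⬝ᵥ Cov *ᵥ (extZ s x) := by
  rw [extZ_dot]
  refine Finset.sum_congr rfl fun i _ => ?_
  congr 1
  show (Cov.submatrix (Subtype.val : ↥s → n) Subtype.val *ᵥ x) i = (Cov *ᵥ extZ s x) ↑i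
  rw [mulVec, mulVec, dotProduct_comm (fun j => Cov ↑i j) (extZ s x), extZ_dot]
  refine Finset.sum_congr rfl fun j _ => by simp [submatrix, mul_comm]

lemma extZ_sq (s : Finset n) (x : ↥s → ℝ) :
    extZ s x ⬝ᵥ extZ s x = x ⬝ᵥ x := by
  rw [extZ_dot, dotProduct]
  exact Finset.sum_congr rfl fun i _ => by simp [extZ, i.2]

lemma extZ_ne_zero (s : Finset n) (x : ↥s → ℝ) (hx : x ≠ 0) : extZ s x ≠ 0 := by
  intro hc
  apply hx
  funext i
  have := congrFun hc ↑i
  simpa [extZ, i.2] using this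

lemma posdef_submatrix {Cov : Matrix n n ℝ} (h : Cov.PosDef) (s : Finset n) :
    (Cov.submatrix (Subtype.val : ↥s → n) Subtype.val).PosDef := by
  refine Matrix.PosDef.of_dotProduct_mulVec_pos ?_ ?_
  · show _ᴴ = _
    rw [conjTranspose_submatrix, h.1.eq]
  · intro x hx
    have h2 := h.dotProduct_mulVec_pos (extZ_ne_zero s x hx)
    rw [star_trivial] at h2 ⊢
    rwa [extZ_quad]

end MatrixLemmas

/-! ### Deterministic lemma -/

lemma aux_det_main {p : ℕ} (Cov : Matrix (Fin p) (Fin p) ℝ) (hpos : Cov.PosDef)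
    (u : Fin p → ℝ) (K ε : ℝ) (hK : 1 ≤ K)
    (hcond : (⨆ i, (hpos.1.inv.eigenvalues) i) / (⨅ i, (hpos.1.inv.eigenvalues) i) ≤ K)
    (hε : 0 < ε) (hε' : ε < 1 / 2)
    (hm : 0 < ∑ i, u i ^ 2)
    (s : Finset (Fin p))
    (hs : (1 / 2 - ε) * ∑ i, u i ^ 2 ≤ ∑ i ∈ s, u i ^ 2) :
    (1 / 2 - ε) / K ≤ subSeparation Cov u s / separation Cov u := by
  have hKpos : (0 : ℝ) < K := by linarith
  set lmn := ⨅ i, (hpos.1.inv.eigenvalues) i with hlmn_def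
  set lmx := ⨆ i, (hpos.1.inv.eigenvalues) i with hlmx_def
  set m := ∑ i, u i ^ 2 with hm_def
  have hne : Nonempty (Fin p) := by
    obtain ⟨i, -, -⟩ := Finset.exists_ne_zero_of_sum_ne_zero hm.ne'
    exact ⟨i⟩
  have hlmn_pos : 0 < lmn := by
    obtain ⟨i0, hi0⟩ := exists_eq_ciInf_of_finite (f := fun i => (hpos.1.inv.eigenvalues) i)
    rw [hlmn_def, ← hi0]
    exact hpos.inv.eigenvalues_pos i0
  have hlmn_le_lmx : lmn ≤ lmx := by
    obtain ⟨i0⟩ := hne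
    exact le_trans (ciInf_le (Set.finite_range _).bddBelow i0)
      (le_ciSup (Set.finite_range _).bddAbove i0)
  have hcond' : lmx ≤ K * lmn := by
    rw [div_le_iff₀ hlmn_pos] at hcond
    linarith
  have hu2 : u ⬝ᵥ u = m := by
    rw [dotProduct, hm_def]; exact Finset.sum_congr rfl fun i _ => by ring
  have hu0 : u ≠ 0 := by
    intro h; rw [hm_def, h] at hm; simp at hm
  have hSle : separation Cov u ≤ lmx * m := by
    have := aux_ray_high hpos.1.inv u
    rw [hu2] at this
    exact this
  have hSpos : 0 < separation Cov u := by
    have := hpos.inv.dotProduct_mulVec_pos hu0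
    rwa [star_trivial] at this
  set u₁ : ↥s → ℝ := fun i => u ↑i with hu₁_def
  set A := Cov.submatrix (Subtype.val : ↥s → Fin p) Subtype.val with hA_def
  have hA : A.PosDef := posdef_submatrix hpos s
  set S1 := ∑ i ∈ s, u i ^ 2 with hS1_def
  have hS1_pos : 0 < S1 := lt_of_lt_of_le (by nlinarith) hs
  have hsum1 : u₁ ⬝ᵥ u₁ = S1 := by
    rw [dotProduct, Finset.univ_eq_attach, hS1_def,
      ← Finset.sum_attach s (fun i => u i ^ 2)]
    exact Finset.sum_congr rfl fun i _ => by rw [hu₁_def]; ring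
  have hu₁0 : u₁ ≠ 0 := by
    intro h
    rw [h] at hsum1
    simp at hsum1
    exact hS1_pos.ne (by rw [← hsum1])
  set v := extZ s u₁ with hv_def
  have hvv : v ⬝ᵥ v = S1 := by rw [hv_def, extZ_sq, hsum1]
  set q := u₁ ⬝ᵥ A *ᵥ u₁ with hq_def
  have hq_eq : q = v ⬝ᵥ Cov *ᵥ v := by rw [hq_def, hA_def, extZ_quad]
  have hq_pos : 0 < q := by
    have := hA.dotProduct_mulVec_pos hu₁0
    rwa [star_trivial] at this
  have hq_le : q * lmn ≤ S1 := by
    have hdet : IsUnit (Cov⁻¹).det := hpos.inv.det_pos.ne'.isUnit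
    set w := (Cov⁻¹)⁻¹ *ᵥ v with hw_def
    have hBw : Cov⁻¹ *ᵥ w = v := by
      rw [hw_def, mulVec_mulVec, Matrix.mul_nonsing_inv _ hdet, one_mulVec]
    have hCovinv : (Cov⁻¹)⁻¹ = Cov := Matrix.nonsing_inv_nonsing_inv Cov hpos.det_pos.ne'.isUnit
    have hqw : q = v ⬝ᵥ w := by rw [hq_eq, hw_def, hCovinv]
    have h1 : lmn * (w ⬝ᵥ w) ≤ v ⬝ᵥ w := by
      have := aux_ray_low hpos.1.inv w
      rw [hBw] at this
      rwa [dotProduct_comm w v] at this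
    have h2 : (v ⬝ᵥ w) ^ 2 ≤ (v ⬝ᵥ v) * (w ⬝ᵥ w) := by
      have h3 := Finset.sum_mul_sq_le_sq_mul_sq Finset.univ v w
      have e1 : v ⬝ᵥ v = ∑ i, v i ^ 2 := Finset.sum_congr rfl fun i _ => by ring
      have e2 : w ⬝ᵥ w = ∑ i, w i ^ 2 := Finset.sum_congr rfl fun i _ => by ring
      rw [e1, e2]
      exact h3
    rw [hqw]
    rw [hqw] at hq_pos
    nlinarith [h1, h2, hvv, hq_pos, hlmn_pos]
  have hsub_eq : subSeparation Cov u s = u₁ ⬝ᵥ A⁻¹ *ᵥ u₁ := rfl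
  have hcs := aux_cs_inv hA u₁
  rw [hsum1, ← hq_def, ← hsub_eq] at hcs
  have hsub_pos : 0 < subSeparation Cov u s := by nlinarith [hcs, hS1_pos, hq_pos]
  have hsub_ge : lmn * S1 ≤ subSeparation Cov u s := by
    nlinarith [hcs, hq_le, hS1_pos, hq_pos, hlmn_pos, hsub_pos]
  rw [div_le_div_iff₀ hKpos hSpos]
  have h1 : (1 / 2 - ε) * separation Cov u ≤ (1 / 2 - ε) * (lmx * m) :=
    mul_le_mul_of_nonneg_left hSle (by linarith)
  have hmpos : 0 < m := hm
  nlinarith [h1, hcond', hsub_ge, hs, hlmn_pos, hmpos, hS1_pos, hsub_pos]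

/-! ### Counting (Chebyshev) lemmas -/

noncomputable def csign (b : Bool) : ℝ := if b then 1/2 else -1/2

lemma aux_sum_prod_bool {p : ℕ} (h : Fin p → Bool → ℝ) :
    ∑ ω : Fin p → Bool, ∏ i, h i (ω i) = ∏ i, (h i true + h i false) := by
  rw [← Fintype.prod_sum h]
  congr 1
  funext i
  exact Fintype.sum_bool (h i)

lemma aux_cov_sum {p : ℕ} (i j : Fin p) :
    ∑ ω : Fin p → Bool, csign (ω i) * csign (ω j)
      = if i = j then (2 : ℝ) ^ p / 4 else 0 := by
  split_ifs with hij
  · subst hij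
    have key : ∀ ω : Fin p → Bool, csign (ω i) * csign (ω i)
        = ∏ k, (if k = i then csign (ω k) * csign (ω k) else 1) := by
      intro ω
      rw [Finset.prod_ite_eq' Finset.univ i (fun k => csign (ω k) * csign (ω k))]
      simp
    rw [Finset.sum_congr rfl fun ω _ => key ω]
    rw [aux_sum_prod_bool (fun k b => if k = i then csign b * csign b else 1)]
    rw [← Finset.mul_prod_erase Finset.univ _ (Finset.mem_univ i)]
    have h2 : ∀ k ∈ Finset.univ.erase i,
        ((if k = i then csign true * csign true else 1)
          + (if k = i then csign false * csign false else 1)) = 2 := by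
      intro k hk
      rw [if_neg (Finset.mem_erase.mp hk).1, if_neg (Finset.mem_erase.mp hk).1]
      norm_num
    rw [Finset.prod_congr rfl h2, Finset.prod_const, if_pos rfl]
    rw [Finset.card_erase_of_mem (Finset.mem_univ i), Finset.card_univ, Fintype.card_fin]
    have hp : p - 1 + 1 = p := Nat.succ_pred_eq_of_pos i.pos
    have h2p : (2:ℝ) ^ p = 2 ^ (p - 1) * 2 := by
      conv_lhs => rw [← hp]
      rw [pow_succ]
    rw [h2p]
    norm_num [csign]
    ring
  · have key : ∀ ω : Fin p → Bool, csign (ω i) * csign (ω j)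
        = ∏ k, (if k = i then csign (ω k) else if k = j then csign (ω k) else 1) := by
      intro ω
      rw [← Finset.prod_subset (Finset.subset_univ {i, j}) (fun k _ hk => by
        simp only [Finset.mem_insert, Finset.mem_singleton] at hk
        push_neg at hk
        rw [if_neg hk.1, if_neg hk.2])]
      rw [Finset.prod_pair hij]
      rw [if_pos rfl, if_neg (Ne.symm hij), if_pos rfl]
    rw [Finset.sum_congr rfl fun ω _ => key ω]
    rw [aux_sum_prod_bool (fun k b => if k = i then csign b else if k = j then csign b else 1)]
    apply Finset.prod_eq_zero (Finset.mem_univ i)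
    rw [if_pos rfl, if_pos rfl]
    simp [csign]
    norm_num

lemma aux_count_cheb (p : ℕ) (a : Fin p → ℝ) (t : ℝ) (ht : 0 < t) :
    ((Finset.univ.filter fun ω : Fin p → Bool =>
        (∑ i, if ω i then a i else 0) < (∑ i, a i) / 2 - t).card : ℝ) * t ^ 2
      ≤ 2 ^ p * (∑ i, a i ^ 2) / 4 := by
  classical
  set g : (Fin p → Bool) → ℝ := fun ω => ∑ i, a i * csign (ω i) with hg
  have hgval : ∀ ω, g ω = (∑ i, if ω i then a i else 0) - (∑ i, a i) / 2 := by
    intro ω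
    rw [hg]
    simp only
    rw [Finset.sum_div, ← Finset.sum_sub_distrib]
    refine Finset.sum_congr rfl fun i _ => ?_
    cases hωi : ω i <;> simp [csign, hωi] <;> ring
  have hT : ∑ ω : Fin p → Bool, g ω ^ 2 = 2 ^ p * (∑ i, a i ^ 2) / 4 := by
    have expand : ∀ ω, g ω ^ 2
        = ∑ i, ∑ j, (a i * a j) * (csign (ω i) * csign (ω j)) := by
      intro ω
      rw [hg]
      simp only
      rw [pow_two, Finset.sum_mul_sum]
      exact Finset.sum_congr rfl fun i _ => Finset.sum_congr rfl fun j _ => by ring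
    rw [Finset.sum_congr rfl fun ω _ => expand ω]
    rw [Finset.sum_comm]
    have inner : ∀ i : Fin p, (∑ j : Fin p, ∑ ω : Fin p → Bool,
        (a i * a j) * (csign (ω i) * csign (ω j))) = a i ^ 2 * (2 ^ p / 4) := by
      intro i
      have h1 : ∀ j : Fin p, (∑ ω : Fin p → Bool,
          (a i * a j) * (csign (ω i) * csign (ω j)))
            = (a i * a j) * (if i = j then (2:ℝ) ^ p / 4 else 0) := by
        intro j
        rw [← Finset.mul_sum, aux_cov_sum]
      rw [Finset.sum_congr rfl fun j _ => h1 j]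
      simp only [mul_ite, mul_zero]
      rw [Finset.sum_ite_eq Finset.univ i (fun j => a i * a j * (2 ^ p / 4))]
      rw [if_pos (Finset.mem_univ i)]
      ring
    rw [show (∑ i : Fin p, ∑ ω : Fin p → Bool, ∑ j : Fin p,
        (a i * a j) * (csign (ω i) * csign (ω j)))
      = ∑ i : Fin p, ∑ j : Fin p, ∑ ω : Fin p → Bool,
        (a i * a j) * (csign (ω i) * csign (ω j))
      from Finset.sum_congr rfl fun i _ => Finset.sum_comm]
    rw [Finset.sum_congr rfl fun i _ => inner i]
    rw [← Finset.sum_mul]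
    ring
  set B := Finset.univ.filter fun ω : Fin p → Bool =>
      (∑ i, if ω i then a i else 0) < (∑ i, a i) / 2 - t with hB
  have step1 : (B.card : ℝ) * t ^ 2 ≤ ∑ ω ∈ B, g ω ^ 2 := by
    have h := Finset.card_nsmul_le_sum B (fun ω => g ω ^ 2) (t ^ 2) (fun ω hω => by
      rw [hB, Finset.mem_filter] at hω
      have hgω : g ω < -t := by rw [hgval]; linarith [hω.2]
      show t ^ 2 ≤ g ω ^ 2
      nlinarith [hgω, ht, sq_nonneg (g ω + t), mul_pos (by linarith : (0:ℝ) < -t - g ω) ht])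
    rwa [nsmul_eq_mul] at h
  have step2 : ∑ ω ∈ B, g ω ^ 2 ≤ ∑ ω : Fin p → Bool, g ω ^ 2 :=
    Finset.sum_le_sum_of_subset_of_nonneg (Finset.subset_univ B)
      (fun ω _ _ => sq_nonneg _)
  linarith [step1, step2, hT.le, hT.ge]

/-! ### Measure lemmas -/

lemma bern_singleton (b : Bool) : bernoulliBoolLaw 2⁻¹ {b} = 2⁻¹ := by
  cases b <;>
    simp [bernoulliBoolLaw, Measure.dirac_apply' _ (measurableSet_singleton _),
      ENNReal.one_sub_inv_two]

instance : IsProbabilityMeasure (bernoulliBoolLaw 2⁻¹) := by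
  constructor
  have : (Set.univ : Set Bool) = {true} ∪ {false} := by
    ext b; cases b <;> simp
  rw [this, measure_union (by simp) (measurableSet_singleton _), bern_singleton,
    bern_singleton, ENNReal.inv_two_add_inv_two]

instance (p : ℕ) : IsProbabilityMeasure (thinningMeasure p 2⁻¹) := by
  unfold thinningMeasure
  infer_instance

lemma thinning_singleton (p : ℕ) (ω : Fin p → Bool) :
    thinningMeasure p 2⁻¹ {ω} = 2⁻¹ ^ p := by
  rw [show ({ω} : Set (Fin p → Bool)) = Set.pi Set.univ (fun i => {ω i}) from
    (Set.univ_pi_singleton ω).symm]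
  rw [thinningMeasure, Measure.pi_pi]
  simp [bern_singleton]

lemma thinning_finset (p : ℕ) (F : Finset (Fin p → Bool)) :
    thinningMeasure p 2⁻¹ ↑F = (F.card : ℝ≥0∞) * 2⁻¹ ^ p := by
  have hrw : (↑F : Set (Fin p → Bool)) = ⋃ ω ∈ F, {ω} := by
    ext x; simp
  rw [hrw, measure_biUnion_finset
    (fun x _ y _ hxy => by simp [Set.disjoint_singleton, hxy])
    (fun ω _ => measurableSet_singleton ω)]
  rw [Finset.sum_congr rfl fun ω _ => thinning_singleton p ω, Finset.sum_const,
    nsmul_eq_mul]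

/-! ### Main theorem -/

/-- thinning preserves the ratio of separation, `J = 2`: under uniform bounds
`|u_{p,i}| ≤ M`, `‖u_p‖² ≥ c·p` and `λ_max(Cov_p⁻¹)/λ_min(Cov_p⁻¹) ≤ K`, if `F₁` is a random
subset of `{1, …, p}` including each coordinate independently with probability `1/2`, then for
every `0 < ε < 1/2`, `P(γ_p ≥ (1/2 - ε)/K) → 1` as `p → ∞`, where `γ_p = S_{F₁}/S_F`. -/
theorem thinning_preserves_ratio_of_separation
    (Covs : ∀ p : ℕ, Matrix (Fin p) (Fin p) ℝ) (us : ∀ p : ℕ, Fin p → ℝ)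
    (hpos : ∀ p, (Covs p).PosDef)
    (M c K : ℝ) (hM : 0 < M) (hc : 0 < c) (hK : 1 ≤ K)
    (hbd : ∀ p i, |us p i| ≤ M)
    (hnorm : ∀ p : ℕ, c * p ≤ ∑ i, us p i ^ 2)
    (hcond : ∀ p : ℕ,
      (⨆ i, ((hpos p).1.inv.eigenvalues) i) / (⨅ i, ((hpos p).1.inv.eigenvalues) i) ≤ K)
    (ε : ℝ) (hε : 0 < ε) (hε' : ε < 1 / 2) :
    Filter.Tendsto
      (fun p => thinningMeasure p 2⁻¹
        {ω | (1 / 2 - ε) / K ≤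
          subSeparation (Covs p) (us p) (Finset.univ.filter fun i => ω i = true)
            / separation (Covs p) (us p)})
      Filter.atTop (nhds 1) := by
  classical
  set δ : ℕ → ℝ := fun p => M ^ 2 / (4 * ε ^ 2 * (c * p)) with hδ_def
  have hδ0 : Filter.Tendsto δ Filter.atTop (nhds 0) := by
    have h1 : Filter.Tendsto (fun p : ℕ => (p : ℝ)⁻¹) Filter.atTop (nhds 0) :=
      tendsto_inv_atTop_zero.comp tendsto_natCast_atTop_atTop
    have h2 : Filter.Tendsto (fun p : ℕ => (M ^ 2 / (4 * ε ^ 2 * c)) * (p : ℝ)⁻¹)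
        Filter.atTop (nhds 0) := by
      simpa using h1.const_mul (M ^ 2 / (4 * ε ^ 2 * c))
    refine h2.congr' ?_
    filter_upwards [Filter.eventually_ge_atTop 1] with p hp
    have hp0 : (0:ℝ) < p := by exact_mod_cast hp
    rw [hδ_def]
    field_simp
  have hof : Filter.Tendsto (fun p => ENNReal.ofReal (δ p)) Filter.atTop (nhds 0) := by
    simpa using ENNReal.tendsto_ofReal hδ0
  have hlow : Filter.Tendsto (fun p => 1 - ENNReal.ofReal (δ p)) Filter.atTop (nhds 1) := by
    have hc' : Filter.Tendsto (fun x : ℝ≥0∞ => 1 - x) (nhds 0) (nhds 1) := by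
      have := (ENNReal.continuous_sub_left (a := (1:ℝ≥0∞)) ENNReal.one_ne_top).continuousAt
        (x := (0:ℝ≥0∞))
      simpa using this.tendsto
    exact hc'.comp hof
  apply tendsto_of_tendsto_of_tendsto_of_le_of_le' hlow tendsto_const_nhds
  · -- eventual lower bound
    filter_upwards [Filter.eventually_ge_atTop 1] with p hp
    set u := us p with hu_def
    have hp0 : (0:ℝ) < p := by exact_mod_cast hp
    have hcp : 0 < c * p := by positivity
    have hm_pos : 0 < ∑ i, u i ^ 2 := lt_of_lt_of_le hcp (hnorm p)
    have ht : 0 < ε * ∑ i, u i ^ 2 := by positivity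
    have hcheb := aux_count_cheb p (fun i => u i ^ 2) (ε * ∑ i, u i ^ 2) ht
    set B := Finset.univ.filter fun ω : Fin p → Bool =>
        (∑ i, if ω i then u i ^ 2 else 0) < (∑ i, u i ^ 2) / 2 - ε * ∑ i, u i ^ 2 with hB_def
    -- real counting bound
    have hreal : (B.card : ℝ) ≤ 2 ^ p * δ p := by
      have ha_sq : ∑ i, (u i ^ 2) ^ 2 ≤ M ^ 2 * ∑ i, u i ^ 2 := by
        rw [Finset.mul_sum]
        refine Finset.sum_le_sum fun i _ => ?_
        have h1 : u i ^ 2 ≤ M ^ 2 := by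
          have h := hbd p i
          nlinarith [h, abs_nonneg (u i), sq_abs (u i)]
        nlinarith [h1, sq_nonneg (u i)]
      have hcardnn : (0:ℝ) ≤ (B.card : ℝ) := Nat.cast_nonneg _
      have h2p : (0:ℝ) < 2 ^ p := by positivity
      have e0 : (B.card : ℝ) * (ε * ∑ i, u i ^ 2) ^ 2 ≤ 2 ^ p * (M ^ 2 * ∑ i, u i ^ 2) / 4 := by
        refine le_trans hcheb ?_
        nlinarith [ha_sq, h2p]
      have e1 : ((B.card : ℝ) * ε ^ 2 * (∑ i, u i ^ 2)) * (∑ i, u i ^ 2)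
          ≤ (2 ^ p * M ^ 2 / 4) * (∑ i, u i ^ 2) := by nlinarith [e0]
      have e2 : (B.card : ℝ) * ε ^ 2 * (∑ i, u i ^ 2) ≤ 2 ^ p * M ^ 2 / 4 :=
        le_of_mul_le_mul_right e1 hm_pos
      have e3 : (B.card : ℝ) * ε ^ 2 * (c * p) ≤ (B.card : ℝ) * ε ^ 2 * (∑ i, u i ^ 2) := by
        nlinarith [hnorm p, mul_nonneg (mul_nonneg hcardnn (sq_nonneg ε))
          (sub_nonneg.mpr (hnorm p))]
      have h4 : (0:ℝ) < 4 * ε ^ 2 * (c * p) := by positivity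
      rw [hδ_def]
      rw [show (2:ℝ) ^ p * (M ^ 2 / (4 * ε ^ 2 * (c * ↑p)))
        = (2 ^ p * M ^ 2) / (4 * ε ^ 2 * (c * ↑p)) from by ring]
      rw [le_div_iff₀ h4]
      nlinarith [e2, e3]
    -- measure of bad set
    have hμB : thinningMeasure p 2⁻¹ ↑B ≤ ENNReal.ofReal (δ p) := by
      rw [thinning_finset]
      have hstep : (B.card : ℝ≥0∞) ≤ ENNReal.ofReal (2 ^ p * δ p) := by
        rw [← ENNReal.ofReal_natCast]
        exact ENNReal.ofReal_le_ofReal hreal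
      calc (B.card : ℝ≥0∞) * 2⁻¹ ^ p
          ≤ ENNReal.ofReal (2 ^ p * δ p) * 2⁻¹ ^ p := by gcongr
        _ = ENNReal.ofReal (δ p) := by
            rw [ENNReal.ofReal_mul (by positivity : (0:ℝ) ≤ 2 ^ p)]
            rw [ENNReal.ofReal_pow (by norm_num : (0:ℝ) ≤ 2), ENNReal.ofReal_ofNat]
            rw [mul_comm ((2:ℝ≥0∞) ^ p) _, mul_assoc, ← mul_pow,
              ENNReal.mul_inv_cancel two_ne_zero ENNReal.ofNat_ne_top, one_pow, mul_one]
    -- good set contains complement of bad set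
    set G := {ω : Fin p → Bool | (1 / 2 - ε) / K ≤
        subSeparation (Covs p) (us p) (Finset.univ.filter fun i => ω i = true)
          / separation (Covs p) (us p)} with hG_def
    have hsub : (↑B : Set (Fin p → Bool))ᶜ ⊆ G := by
      intro ω hω
      rw [Set.mem_compl_iff, Finset.mem_coe, hB_def, Finset.mem_filter] at hω
      push_neg at hω
      have hωge := hω (Finset.mem_univ ω)
      have hs' : (1 / 2 - ε) * ∑ i, u i ^ 2
          ≤ ∑ i ∈ Finset.univ.filter (fun i => ω i = true), u i ^ 2 := by
        rw [Finset.sum_filter]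
        calc (1 / 2 - ε) * ∑ i, u i ^ 2 = (∑ i, u i ^ 2) / 2 - ε * ∑ i, u i ^ 2 := by ring
          _ ≤ ∑ i, if ω i = true then u i ^ 2 else 0 := hωge
      exact aux_det_main (Covs p) (hpos p) u K ε hK (hcond p) hε hε' hm_pos _ hs'
    -- conclude the lower bound
    have h1le : (1:ℝ≥0∞) ≤ thinningMeasure p 2⁻¹ ↑B + thinningMeasure p 2⁻¹ G := by
      have huniv : (1:ℝ≥0∞) = thinningMeasure p 2⁻¹ Set.univ := (measure_univ).symm
      rw [huniv, ← Set.union_compl_self (↑B : Set (Fin p → Bool))]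
      refine le_trans (measure_union_le _ _) ?_
      exact add_le_add_right (measure_mono hsub) _
    rw [tsub_le_iff_right]
    calc (1:ℝ≥0∞) ≤ thinningMeasure p 2⁻¹ ↑B + thinningMeasure p 2⁻¹ G := h1le
      _ ≤ ENNReal.ofReal (δ p) + thinningMeasure p 2⁻¹ G := add_le_add_left hμB _
      _ = thinningMeasure p 2⁻¹ G + ENNReal.ofReal (δ p) := add_comm _ _
  · filter_upwards with p
    exact prob_le_one
end
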